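/- arXiv:2401.06313 — 5 statements merged into one kernel-verified Lean document; each statement's English description precedes it below -/
import Mathlib

section
/- Let N_M, N_l, N_F be positive integers and N = N_F(N_M−1)+1. For every f ∈ {1,…,N_F}, every w ∈ [−1/2,1/2], and every Q_f ∈ ℂ^{N_M×N_l}, the lifting map satisfies Q_f^H a(f,w) = (R_f(Q_f))^H v_N(z), where z = exp(−2πi w). Consequently, for any tensor Q ∈ ℂ^{N_M×N_l×N_F} with slices Q_1,…,Q_{N_F} and Q̃ = [R_1(Q_1) … R_{N_F}(Q_{N_F})] ∈ ℂ^{N×N_l N_F}, one has ‖Ψ(Q,w)‖_F² = ‖Q̃^H v_N(z)‖_2², where Ψ(Q,w) ∈ ℂ^{N_F×N_l} is the matrix whose f-th row is (Q_f^H a(f,w))ᵀ. -/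
open Matrix BigOperators
open scoped ComplexOrder

noncomputable section

/-- `vN N z = (z^0, z^1, …, z^{N-1})ᵀ ∈ ℂ^N`. -/
def vN (N : ℕ) (z : ℂ) : Fin N → ℂ := fun i => z ^ (i : ℕ)

/-- Array manifold vector `a(f,w) ∈ ℂ^{N_M}`, with `a(f,w)_m = exp(-2πi·w·f·(m-1))`
(0-indexed: entry `m` is `exp(-2πi·w·f·m)`). -/
def aVec (N_M : ℕ) (f : ℕ) (w : ℝ) : Fin N_M → ℂ :=
  fun m => Complex.exp ((-(2 * Real.pi * w * f * (m : ℕ)) : ℝ) * Complex.I)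

/-- The lifting map `R_f : ℂ^{N_M×N_l} → ℂ^{N×N_l}`: row `m` of `Q` is placed in row
`f·(m-1)+1` (0-indexed: row `f·m`) of the output, all other rows are zero. -/
def Rlift (N_M N_l N : ℕ) (f : ℕ) (Q : Matrix (Fin N_M) (Fin N_l) ℂ) :
    Matrix (Fin N) (Fin N_l) ℂ :=
  fun i l => ∑ m : Fin N_M, if (i : ℕ) = f * (m : ℕ) then Q m l else 0

/-- The lifted matrix `Q̃ = [R_1(Q_1) … R_{N_F}(Q_{N_F})] ∈ ℂ^{N × N_l N_F}`. -/
def Qtilde (N_M N_l N_F N : ℕ) (Q : Fin N_M → Fin N_l → Fin N_F → ℂ) :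
    Matrix (Fin N) (Fin N_F × Fin N_l) ℂ :=
  fun i q => Rlift N_M N_l N ((q.1 : ℕ) + 1) (fun m l => Q m l q.1) i q.2

/-- Frobenius norm of a complex matrix. -/
def frobNorm {m n : Type*} [Fintype m] [Fintype n] (X : Matrix m n ℂ) : ℝ :=
  Real.sqrt (∑ i, ∑ j, Complex.normSq (X i j))

/-- Dual polynomial matrix `Ψ(Q,w) ∈ ℂ^{N_F × N_l}`, whose `f`-th row is `(Q_fᴴ a(f,w))ᵀ`. -/
def Psi (N_M N_l N_F : ℕ) (Q : Fin N_M → Fin N_l → Fin N_F → ℂ) (w : ℝ) :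
    Matrix (Fin N_F) (Fin N_l) ℂ :=
  fun f l => ∑ m, (starRingEnd ℂ) (Q m l f) * aVec N_M ((f : ℕ) + 1) w m

set_option maxHeartbeats 1000000 in
lemma key_lift (N_M N_l N_F N : ℕ) (hM : 0 < N_M) (hN : N = N_F * (N_M - 1) + 1)
    (f : ℕ) (hf1 : 1 ≤ f) (hf2 : f ≤ N_F) (w : ℝ)
    (Qf : Matrix (Fin N_M) (Fin N_l) ℂ) :
    Qfᴴ.mulVec (aVec N_M f w) =
      (Rlift N_M N_l N f Qf)ᴴ.mulVec
        (vN N (Complex.exp ((-(2 * Real.pi * w) : ℝ) * Complex.I))) := by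
  funext l
  have hbound : ∀ m : Fin N_M, f * (m : ℕ) < N := by
    intro m
    have hm : (m : ℕ) ≤ N_M - 1 := Nat.le_sub_one_of_lt m.isLt
    have : f * (m : ℕ) ≤ N_F * (N_M - 1) :=
      Nat.mul_le_mul hf2 hm
    omega
  simp only [mulVec, dotProduct, conjTranspose_apply, Rlift, vN, RCLike.star_def,
    map_sum, Finset.sum_mul]
  rw [Finset.sum_comm]
  refine Finset.sum_congr rfl fun m _ => ?_
  have hstep : ∀ i : Fin N,
      (starRingEnd ℂ) (if (i : ℕ) = f * (m : ℕ) then Qf m l else 0) *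
          Complex.exp ((-(2 * Real.pi * w) : ℝ) * Complex.I) ^ (i : ℕ) =
        if i = (⟨f * (m : ℕ), hbound m⟩ : Fin N) then
          (starRingEnd ℂ) (Qf m l) *
            Complex.exp ((-(2 * Real.pi * w) : ℝ) * Complex.I) ^ (f * (m : ℕ)) else 0 := by
    intro i
    by_cases h : (i : ℕ) = f * (m : ℕ)
    · rw [if_pos h, if_pos (Fin.ext h), h]
    · rw [if_neg h, if_neg (fun hh => h (by rw [hh]))]
      simp
  have hsum : ∑ i : Fin N,
      (starRingEnd ℂ) (if (i : ℕ) = f * (m : ℕ) then Qf m l else 0) *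
        Complex.exp ((-(2 * Real.pi * w) : ℝ) * Complex.I) ^ (i : ℕ) =
      (starRingEnd ℂ) (Qf m l) *
        Complex.exp ((-(2 * Real.pi * w) : ℝ) * Complex.I) ^ (f * (m : ℕ)) := by
    rw [Finset.sum_congr rfl (fun i _ => hstep i)]
    simp
  rw [hsum]
  have haVec : aVec N_M f w m =
      Complex.exp ((-(2 * Real.pi * w) : ℝ) * Complex.I) ^ (f * (m : ℕ)) := by
    rw [aVec, ← Complex.exp_nat_mul]
    congr 1
    push_cast
    ring
  rw [haVec]

/-- The lifting map satisfies `Q_fᴴ a(f,w) = (R_f(Q_f))ᴴ v_N(z)` with `z = exp(-2πi w)`;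
consequently `‖Ψ(Q,w)‖_F² = ‖Q̃ᴴ v_N(z)‖₂²`. -/
theorem stmt2 (N_M N_l N_F : ℕ) (hM : 0 < N_M) (hl : 0 < N_l) (hF : 0 < N_F)
    (N : ℕ) (hN : N = N_F * (N_M - 1) + 1) :
    (∀ f : ℕ, 1 ≤ f → f ≤ N_F → ∀ w ∈ Set.Icc (-(1:ℝ)/2) (1/2),
      ∀ Qf : Matrix (Fin N_M) (Fin N_l) ℂ,
        Qfᴴ.mulVec (aVec N_M f w) =
          (Rlift N_M N_l N f Qf)ᴴ.mulVec
            (vN N (Complex.exp ((-(2 * Real.pi * w) : ℝ) * Complex.I)))) ∧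
    (∀ (Q : Fin N_M → Fin N_l → Fin N_F → ℂ), ∀ w ∈ Set.Icc (-(1:ℝ)/2) (1/2),
      frobNorm (Psi N_M N_l N_F Q w) ^ 2 =
        ∑ q : Fin N_F × Fin N_l,
          Complex.normSq
            ((Qtilde N_M N_l N_F N Q)ᴴ.mulVec
              (vN N (Complex.exp ((-(2 * Real.pi * w) : ℝ) * Complex.I))) q)) := by
  constructor
  · intro f hf1 hf2 w _ Qf
    exact key_lift N_M N_l N_F N hM hN f hf1 hf2 w Qf
  · intro Q w hw
    have hnn : 0 ≤ ∑ i, ∑ j, Complex.normSq (Psi N_M N_l N_F Q w i j) :=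
      Finset.sum_nonneg fun i _ => Finset.sum_nonneg fun j _ => Complex.normSq_nonneg _
    rw [frobNorm, Real.sq_sqrt hnn, ← Finset.sum_product']
    refine Finset.sum_congr rfl fun q _ => ?_
    congr 1
    obtain ⟨f, l⟩ := q
    have hkey := key_lift N_M N_l N_F N hM hN ((f : ℕ) + 1) (Nat.le_add_left 1 f)
      f.isLt w (fun m l' => Q m l' f)
    have := congrFun hkey l
    simpa [mulVec, dotProduct, Psi, Qtilde, conjTranspose_apply, Matrix.conjTranspose, Matrix.transpose, Matrix.map, Matrix.of_apply, RCLike.star_def] using this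
end
end

section
/- Let N, L be positive integers, P₀ ∈ ℂ^{N×N} Hermitian and Q̃ ∈ ℂ^{N×L}. Suppose the block matrix [[P₀, Q̃],[Q̃^H, I_L]] is positive semidefinite and ∑_{i=1}^{N−k} P₀(i, i+k) = δ_{k,0} for all k = 0, 1, …, N−1. Then for every z ∈ ℂ with |z| = 1, ‖Q̃^H v_N(z)‖_2 ≤ 1. -/
open Matrix BigOperators
open scoped ComplexOrder

noncomputable section

lemma split_pow (N : ℕ) (z c : ℂ) (hcz : c * z = 1) (i j : Fin N) :
    c ^ (i : ℕ) * z ^ (j : ℕ)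
      = (∑ k ∈ Finset.range N, if (j : ℕ) = (i : ℕ) + k then z ^ k else 0)
        + (∑ k ∈ Finset.Ico 1 N, if (i : ℕ) = (j : ℕ) + k then c ^ k else 0) := by
  rcases le_or_gt (i : ℕ) (j : ℕ) with h | h
  · have h1 : (∑ k ∈ Finset.range N, if (j : ℕ) = (i : ℕ) + k then z ^ k else 0)
        = z ^ ((j : ℕ) - (i : ℕ)) := by
      rw [Finset.sum_eq_single ((j : ℕ) - (i : ℕ))]
      · rw [if_pos (by omega)]
      · intro k _ hk; rw [if_neg (by omega)]
      · intro hmem; exact absurd (Finset.mem_range.2 (by omega : (j:ℕ) - (i:ℕ) < N)) hmem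
    have h2 : (∑ k ∈ Finset.Ico 1 N, if (i : ℕ) = (j : ℕ) + k then c ^ k else 0) = 0 := by
      apply Finset.sum_eq_zero; intro k hk
      rw [Finset.mem_Ico] at hk; rw [if_neg (by omega)]
    rw [h1, h2, add_zero]
    have : z ^ (j : ℕ) = z ^ (i : ℕ) * z ^ ((j : ℕ) - (i : ℕ)) := by
      rw [← pow_add]; congr 1; omega
    rw [this, ← mul_assoc, ← mul_pow, hcz, one_pow, one_mul]
  · have h1 : (∑ k ∈ Finset.range N, if (j : ℕ) = (i : ℕ) + k then z ^ k else 0) = 0 := by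
      apply Finset.sum_eq_zero; intro k _; rw [if_neg (by omega)]
    have h2 : (∑ k ∈ Finset.Ico 1 N, if (i : ℕ) = (j : ℕ) + k then c ^ k else 0)
        = c ^ ((i : ℕ) - (j : ℕ)) := by
      rw [Finset.sum_eq_single ((i : ℕ) - (j : ℕ))]
      · rw [if_pos (by omega)]
      · intro k _ hk; rw [if_neg (by omega)]
      · intro hmem; exact absurd (Finset.mem_Ico.2 (by omega)) hmem
    rw [h1, h2, zero_add]
    have : c ^ (i : ℕ) = c ^ ((i : ℕ) - (j : ℕ)) * c ^ (j : ℕ) := by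
      rw [← pow_add]; congr 1; omega
    rw [this, mul_assoc, ← mul_pow, hcz, one_pow, mul_one]

/-- If `P₀` is Hermitian with `[[P₀, Q̃],[Q̃ᴴ, I_L]] ⪰ 0` and
`∑_{i=1}^{N-k} P₀(i,i+k) = δ_{k,0}` for `k = 0,…,N-1`, then `‖Q̃ᴴ v_N(z)‖₂ ≤ 1` for every
`z` on the unit circle. -/
theorem stmt4 (N L : ℕ) (hN : 0 < N) (hL : 0 < L)
    (P₀ : Matrix (Fin N) (Fin N) ℂ) (Qt : Matrix (Fin N) (Fin L) ℂ)
    (hHerm : P₀.IsHermitian)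
    (hPSD : (Matrix.fromBlocks P₀ Qt Qtᴴ (1 : Matrix (Fin L) (Fin L) ℂ)).PosSemidef)
    (htr : ∀ k : ℕ, k < N →
      (∑ i : Fin N, ∑ j : Fin N, if (j : ℕ) = (i : ℕ) + k then P₀ i j else 0)
        = if k = 0 then 1 else 0)
    (z : ℂ) (hz : ‖z‖ = 1) :
    Real.sqrt (∑ p, Complex.normSq (Qtᴴ.mulVec (vN N z) p)) ≤ 1 := by
  set v : Fin N → ℂ := vN N z with hv
  set c : ℂ := starRingEnd ℂ z with hc
  have hcz : c * z = 1 := by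
    rw [hc, mul_comm, Complex.mul_conj]
    norm_cast
    rw [Complex.normSq_eq_norm_sq, hz, one_pow]
  -- anti-diagonal sums vanish for k ≥ 1
  have hU : ∀ k : ℕ, 1 ≤ k → k < N →
      (∑ i : Fin N, ∑ j : Fin N, if (i : ℕ) = (j : ℕ) + k then P₀ i j else 0) = 0 := by
    intro k hk1 hkN
    have h0 := htr k hkN
    rw [if_neg (by omega)] at h0
    have : (∑ i : Fin N, ∑ j : Fin N, if (i : ℕ) = (j : ℕ) + k then P₀ i j else 0)
        = star (∑ i : Fin N, ∑ j : Fin N, if (j : ℕ) = (i : ℕ) + k then P₀ i j else 0) := by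
      rw [star_sum]
      rw [Finset.sum_comm]
      apply Finset.sum_congr rfl; intro i _
      rw [star_sum]
      apply Finset.sum_congr rfl; intro j _
      split_ifs
      · exact (hHerm.apply j i).symm
      · simp
    rw [this, h0, star_zero]
  -- the quadratic form of P₀ at v equals 1
  have key : star v ⬝ᵥ P₀.mulVec v = 1 := by
    have hstep : star v ⬝ᵥ P₀.mulVec v
        = ∑ i : Fin N, ∑ j : Fin N, P₀ i j * (c ^ (i : ℕ) * z ^ (j : ℕ)) := by
      simp only [dotProduct, mulVec, Pi.star_apply, hv, vN, Finset.mul_sum]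
      apply Finset.sum_congr rfl; intro i _
      apply Finset.sum_congr rfl; intro j _
      simp only [Complex.star_def, map_pow]
      ring
    rw [hstep]
    have hsplit : ∀ i j : Fin N, P₀ i j * (c ^ (i : ℕ) * z ^ (j : ℕ))
        = (∑ k ∈ Finset.range N, (if (j : ℕ) = (i : ℕ) + k then P₀ i j else 0) * z ^ k)
          + (∑ k ∈ Finset.Ico 1 N, (if (i : ℕ) = (j : ℕ) + k then P₀ i j else 0) * c ^ k) := by
      intro i j
      rw [split_pow N z c hcz i j, mul_add, Finset.mul_sum, Finset.mul_sum]
      congr 1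
      · apply Finset.sum_congr rfl; intro k _
        rw [mul_ite, ite_mul, mul_zero, zero_mul]
      · apply Finset.sum_congr rfl; intro k _
        rw [mul_ite, ite_mul, mul_zero, zero_mul]
    calc (∑ i : Fin N, ∑ j : Fin N, P₀ i j * (c ^ (i : ℕ) * z ^ (j : ℕ)))
        = ∑ i : Fin N, ∑ j : Fin N,
            ((∑ k ∈ Finset.range N, (if (j : ℕ) = (i : ℕ) + k then P₀ i j else 0) * z ^ k)
          + (∑ k ∈ Finset.Ico 1 N, (if (i : ℕ) = (j : ℕ) + k then P₀ i j else 0) * c ^ k)) := by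
          apply Finset.sum_congr rfl; intro i _
          apply Finset.sum_congr rfl; intro j _
          exact hsplit i j
      _ = (∑ k ∈ Finset.range N,
              (∑ i : Fin N, ∑ j : Fin N, if (j : ℕ) = (i : ℕ) + k then P₀ i j else 0) * z ^ k)
          + (∑ k ∈ Finset.Ico 1 N,
              (∑ i : Fin N, ∑ j : Fin N, if (i : ℕ) = (j : ℕ) + k then P₀ i j else 0) * c ^ k) := by
          have hswap : ∀ (s : Finset ℕ) (g : Fin N → Fin N → ℕ → ℂ),
              (∑ i : Fin N, ∑ j : Fin N, ∑ k ∈ s, g i j k)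
                = ∑ k ∈ s, ∑ i : Fin N, ∑ j : Fin N, g i j k := by
            intro s g
            calc (∑ i : Fin N, ∑ j : Fin N, ∑ k ∈ s, g i j k)
                = ∑ i : Fin N, ∑ k ∈ s, ∑ j : Fin N, g i j k :=
                  Finset.sum_congr rfl (fun i _ => Finset.sum_comm)
              _ = ∑ k ∈ s, ∑ i : Fin N, ∑ j : Fin N, g i j k := Finset.sum_comm
          simp only [Finset.sum_add_distrib]
          congr 1
          · rw [hswap]
            apply Finset.sum_congr rfl; intro k _
            rw [Finset.sum_mul]
            apply Finset.sum_congr rfl; intro i _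
            rw [Finset.sum_mul]
          · rw [hswap]
            apply Finset.sum_congr rfl; intro k _
            rw [Finset.sum_mul]
            apply Finset.sum_congr rfl; intro i _
            rw [Finset.sum_mul]
      _ = 1 := by
          have h1 : (∑ k ∈ Finset.range N,
              (∑ i : Fin N, ∑ j : Fin N, if (j : ℕ) = (i : ℕ) + k then P₀ i j else 0) * z ^ k)
              = 1 := by
            rw [Finset.sum_congr rfl (fun k hk => by
              rw [htr k (Finset.mem_range.1 hk)])]
            rw [Finset.sum_eq_single 0]
            · simp
            · intro k _ hk; simp [hk]
            · intro h; exact absurd (Finset.mem_range.2 hN) h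
          have h2 : (∑ k ∈ Finset.Ico 1 N,
              (∑ i : Fin N, ∑ j : Fin N, if (i : ℕ) = (j : ℕ) + k then P₀ i j else 0) * c ^ k)
              = 0 := by
            apply Finset.sum_eq_zero; intro k hk
            rw [Finset.mem_Ico] at hk
            rw [hU k hk.1 hk.2, zero_mul]
          rw [h1, h2, add_zero]
  -- quadratic form argument
  set w : Fin L → ℂ := Qtᴴ.mulVec v with hw
  have hq := hPSD.dotProduct_mulVec_nonneg (Sum.elim v (-w))
  have hstar : star (Sum.elim v (-w)) = Sum.elim (star v) (star (-w)) := by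
    funext p; cases p <;> rfl
  rw [hstar, Matrix.fromBlocks_mulVec, sumElim_dotProduct_sumElim] at hq
  simp only [Sum.elim_comp_inl, Sum.elim_comp_inr] at hq
  have hQv : star v ⬝ᵥ Qt.mulVec (-w) = -(star w ⬝ᵥ w) := by
    rw [Matrix.dotProduct_mulVec]
    have : Matrix.vecMul (star v) Qt = star w := by
      rw [hw, Matrix.star_mulVec, Matrix.conjTranspose_conjTranspose]
    rw [this, dotProduct_neg]
  have hsimp : star v ⬝ᵥ (P₀.mulVec v + Qt.mulVec (-w))
      + star (-w) ⬝ᵥ (Qtᴴ.mulVec v + (1 : Matrix (Fin L) (Fin L) ℂ).mulVec (-w))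
      = 1 - star w ⬝ᵥ w := by
    simp only [Matrix.one_mulVec, ← hw, dotProduct_add, dotProduct_neg,
      star_neg, neg_dotProduct, key, hQv]
    ring
  rw [hsimp] at hq
  have hww : star w ⬝ᵥ w = ((∑ p, Complex.normSq (w p) : ℝ) : ℂ) := by
    rw [dotProduct]
    push_cast
    apply Finset.sum_congr rfl; intro p _
    rw [Pi.star_apply, Complex.star_def, mul_comm, Complex.mul_conj]
  have hle : ((∑ p, Complex.normSq (w p) : ℝ) : ℂ) ≤ 1 := by
    rw [← hww]; exact sub_nonneg.mp hq
  have hle' : (∑ p, Complex.normSq (w p) : ℝ) ≤ 1 := by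
    rw [show (1 : ℂ) = ((1 : ℝ) : ℂ) by norm_num] at hle
    exact_mod_cast hle
  have hfin := Real.sqrt_le_sqrt hle'
  rw [Real.sqrt_one] at hfin
  exact hfin

end
end

section
/- Let N_M ≥ 1, N_F ≥ 1, M ⊆ {0,1,…,N_M−1}, F ⊆ {1,…,N_F}, U = {m·f : m ∈ M, f ∈ F} with elements U_1 < U_2 < … < U_{N_u}, and N = N_F(N_M−1)+1. Let u = (u_0,…,u_{N−1}) ∈ ℂ^N be such that Toep(u) is positive semidefinite, and let K = rank(Toep(u)). Then T(u) ∈ ℂ^{N_u×N_u} is an (N_u, K)-irregular Toeplitz matrix: there exist distinct z_1,…,z_K ∈ ℂ with |z_k| = 1 and positive reals d_1,…,d_K such that T(u) = W(γ,z)·diag(d_1,…,d_K)·W(γ,z)^H, where γ = (U_1,…,U_{N_u}) and W(γ,z) ∈ ℂ^{N_u×K} is the irregular Vandermonde matrix with entries W(γ,z)(i,k) = z_k^{γ_i}. -/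
open Matrix BigOperators
open scoped ComplexOrder

noncomputable section

/-- Hermitian Toeplitz matrix `Toep(u) ∈ ℂ^{N×N}`: `Toep(u)(i,j) = u_{j-i}` if `j ≥ i`,
and `conj(u_{i-j})` otherwise. -/
def ToepMat (N : ℕ) (u : Fin N → ℂ) : Matrix (Fin N) (Fin N) ℂ :=
  fun i j =>
    if (i : ℕ) ≤ (j : ℕ) then
      u ⟨(j : ℕ) - (i : ℕ), lt_of_le_of_lt (Nat.sub_le _ _) j.isLt⟩
    else
      (starRingEnd ℂ) (u ⟨(i : ℕ) - (j : ℕ), lt_of_le_of_lt (Nat.sub_le _ _) i.isLt⟩)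

/-- The irregular matrix `T(v) ∈ ℂ^{N_u×N_u}` built from `v ∈ ℂ^N` and the sorted index
set `U`: `T(v)(i,j) = v_{U_j-U_i}` if `U_j ≥ U_i` and `conj(v_{U_i-U_j})` otherwise;
equivalently, `T(v) = P_U Toep(v) P_Uᴴ`. -/
def Tirr (N N_u : ℕ) (U : Fin N_u → Fin N) (v : Fin N → ℂ) :
    Matrix (Fin N_u) (Fin N_u) ℂ :=
  fun i j => ToepMat N v (U i) (U j)

lemma conj_pow_mul_pow {z : ℂ} (hz : ‖z‖ = 1) {a b : ℕ} (hab : a ≤ b) :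
    (starRingEnd ℂ) z ^ a * z ^ b = z ^ (b - a) := by
  have h1 : (starRingEnd ℂ) z * z = 1 := by
    rw [mul_comm, Complex.mul_conj, Complex.normSq_eq_norm_sq, hz]; norm_num
  have h2 : z ^ b = z ^ a * z ^ (b - a) := by rw [← pow_add, Nat.add_sub_cancel' hab]
  rw [h2, ← mul_assoc, ← mul_pow, h1, one_pow, one_mul]

lemma conj_pow_mul_pow' {z : ℂ} (hz : ‖z‖ = 1) {a b : ℕ} (hab : b ≤ a) :
    (starRingEnd ℂ) z ^ a * z ^ b = (starRingEnd ℂ) z ^ (a - b) := by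
  have hz' : ‖(starRingEnd ℂ) z‖ = 1 := by rwa [Complex.norm_conj]
  have := conj_pow_mul_pow hz' (a := b) (b := a) hab
  rw [Complex.conj_conj] at this
  rw [mul_comm, this]

variable {E : Type*} [NormedAddCommGroup E] [InnerProductSpace ℂ E]

local notation "⟪" x ", " y "⟫" => @inner ℂ _ _ x y

lemma isometry_gen_eigen (f : E →ₗᵢ[ℂ] E) (μ : ℂ) :
    ∀ (k : ℕ) (v : E), ((f.toLinearMap - μ • (1 : Module.End ℂ E)) ^ k) v = 0 → f v = μ • v := by
  intro k
  induction k with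
  | zero => intro v hv; simp only [pow_zero, Module.End.one_apply] at hv; simp [hv]
  | succ k ih =>
    intro v hv
    set T := f.toLinearMap - μ • (1 : Module.End ℂ E) with hT
    have hw : (T ^ k) (T v) = 0 := by
      rw [← Module.End.mul_apply, ← pow_succ]; exact hv
    have hfw := ih (T v) hw
    set w := T v with hwdef
    have hwv : w = f v - μ • v := by
      simp [hwdef, hT, LinearMap.sub_apply, LinearMap.smul_apply]
    by_cases hw0 : w = 0
    · rw [hwv] at hw0; rw [sub_eq_zero] at hw0; exact hw0
    · exfalso
      have hμ1 : ‖μ‖ = 1 := by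
        have h1 : ‖f w‖ = ‖w‖ := f.norm_map w
        rw [hfw, norm_smul] at h1
        have := norm_ne_zero_iff.mpr hw0
        field_simp at h1
        exact h1
      have hμ0 : μ ≠ 0 := by intro h; rw [h] at hμ1; simp at hμ1
      have hfv : f v = μ • v + w := by rw [hwv]; abel
      have key : ∀ n : ℕ, (f.toLinearMap ^ n) v = μ ^ n • v + ((n : ℂ) * μ ^ n * μ⁻¹) • w := by
        intro n
        induction n with
        | zero => simp
        | succ n ihn =>
          rw [pow_succ', Module.End.mul_apply, ihn, map_add, _root_.map_smul, _root_.map_smul]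
          have hfl : f.toLinearMap v = f v := rfl
          have hflw : f.toLinearMap w = f w := rfl
          rw [hfl, hflw, hfv, hfw]
          rw [smul_add, smul_smul, smul_smul, add_assoc, ← add_smul]
          congr 1
          congr 1
          field_simp
          push_cast
          ring
      have hnorm : ∀ n : ℕ, ‖(f.toLinearMap ^ n) v‖ = ‖v‖ := by
        intro n
        induction n with
        | zero => simp
        | succ n ihn =>
          rw [pow_succ', Module.End.mul_apply]
          have : f.toLinearMap ((f.toLinearMap ^ n) v) = f ((f.toLinearMap ^ n) v) := rfl
          rw [this, f.norm_map, ihn]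
      have hbound : ∀ n : ℕ, (n : ℝ) * ‖w‖ ≤ 2 * ‖v‖ := by
        intro n
        have h1 := key n
        have h2 : ((n : ℂ) * μ ^ n * μ⁻¹) • w = (f.toLinearMap ^ n) v - μ ^ n • v := by
          rw [h1]; abel
        have h3 : ‖((n : ℂ) * μ ^ n * μ⁻¹) • w‖ ≤ ‖(f.toLinearMap ^ n) v‖ + ‖μ ^ n • v‖ := by
          rw [h2]; exact norm_sub_le _ _
        rw [norm_smul, norm_smul, hnorm, norm_pow, hμ1, one_pow, one_mul] at h3
        have h4 : ‖(n : ℂ) * μ ^ n * μ⁻¹‖ = (n : ℝ) := by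
          rw [norm_mul, norm_mul, norm_pow, hμ1, norm_inv, hμ1]
          simp
        rw [h4] at h3
        linarith
      obtain ⟨n, hn⟩ := exists_nat_gt (2 * ‖v‖ / ‖w‖)
      have hwpos : (0:ℝ) < ‖w‖ := norm_pos_iff.mpr hw0
      have := hbound n
      rw [div_lt_iff₀ hwpos] at hn
      linarith

lemma eig_orth (f : E →ₗᵢ[ℂ] E) {l μ : ℂ} {x y : E} (hx : f x = l • x) (hy : f y = μ • y)
    (hl : ‖l‖ = 1) (hne : l ≠ μ) : ⟪x, y⟫ = 0 := by
  have h := f.inner_map_map x y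
  rw [hx, hy, inner_smul_left, inner_smul_right] at h
  by_contra hp
  have h2 : ((starRingEnd ℂ) l * μ) * ⟪x,y⟫ = 1 * ⟪x,y⟫ := by
    rw [one_mul, mul_assoc]; exact h
  have h2' := mul_right_cancel₀ hp h2
  have h3 : (starRingEnd ℂ) l * l = 1 := by
    rw [mul_comm, Complex.mul_conj, Complex.normSq_eq_norm_sq, hl]; norm_num
  have hl0 : (starRingEnd ℂ) l ≠ 0 := by
    simp only [ne_eq, map_eq_zero]
    intro hh; rw [hh] at hl; simp at hl
  exact hne (mul_left_cancel₀ hl0 (h3.trans h2'.symm))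

lemma gram_isometry {n : ℕ} {V : Type*} [NormedAddCommGroup V] [InnerProductSpace ℂ V]
    [FiniteDimensional ℂ V] (x y : Fin n → V)
    (h : ∀ i j, ⟪x i, x j⟫ = ⟪y i, y j⟫) : ∃ S : V →ₗᵢ[ℂ] V, ∀ i, S (x i) = y i := by
  classical
  set fm : (Fin n → ℂ) →ₗ[ℂ] V := Fintype.linearCombination ℂ x with hfm
  set gm : (Fin n → ℂ) →ₗ[ℂ] V := Fintype.linearCombination ℂ y with hgm
  have hGram : ∀ a b : Fin n → ℂ, ⟪gm a, gm b⟫ = ⟪fm a, fm b⟫ := by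
    intro a b
    rw [hfm, hgm, Fintype.linearCombination_apply, Fintype.linearCombination_apply,
      Fintype.linearCombination_apply, Fintype.linearCombination_apply]
    rw [sum_inner, sum_inner]
    refine Finset.sum_congr rfl fun i _ => ?_
    rw [inner_sum, inner_sum]
    refine Finset.sum_congr rfl fun j _ => ?_
    rw [inner_smul_left, inner_smul_left, inner_smul_right, inner_smul_right, h i j]
  have hker : LinearMap.ker fm ≤ LinearMap.ker gm := by
    intro a ha
    rw [LinearMap.mem_ker] at ha ⊢
    rw [← inner_self_eq_zero (𝕜 := ℂ), hGram, ha, inner_zero_right]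
  set L0 : LinearMap.range fm →ₗ[ℂ] V :=
    (Submodule.liftQ (LinearMap.ker fm) gm hker).comp
      (LinearMap.quotKerEquivRange fm).symm.toLinearMap with hL0def
  have hL0 : ∀ a : Fin n → ℂ, L0 ⟨fm a, LinearMap.mem_range_self _ a⟩ = gm a := by
    intro a
    have h1 : (LinearMap.quotKerEquivRange fm).symm ⟨fm a, LinearMap.mem_range_self _ a⟩
        = Submodule.Quotient.mk a := by
      rw [LinearEquiv.symm_apply_eq]
      exact Subtype.ext (LinearMap.quotKerEquivRange_apply_mk fm a).symm
    rw [hL0def]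
    simp only [LinearMap.comp_apply, LinearEquiv.coe_toLinearMap, h1, Submodule.liftQ_apply]
  have hpres : ∀ p q : LinearMap.range fm, ⟪L0 p, L0 q⟫ = ⟪p, q⟫ := by
    rintro ⟨pv, hp⟩ ⟨qv, hq⟩
    obtain ⟨a, rfl⟩ := hp
    obtain ⟨b, rfl⟩ := hq
    rw [hL0 a, hL0 b, hGram]
    rfl
  refine ⟨(L0.isometryOfInner hpres).extend, fun i => ?_⟩
  have hmem1 : fm (Pi.single i 1) = x i := by
    rw [hfm, Fintype.linearCombination_apply_single, one_smul]
  have hmem2 : gm (Pi.single i 1) = y i := by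
    rw [hgm, Fintype.linearCombination_apply_single, one_smul]
  have h2 : x i = ((⟨fm (Pi.single i 1), LinearMap.mem_range_self _ _⟩ :
      LinearMap.range fm) : V) := by simp [hmem1]
  rw [h2, LinearIsometry.extend_apply, LinearMap.coe_isometryOfInner, hL0, hmem2]

set_option maxHeartbeats 1000000 in
lemma exists_atoms (N : ℕ) (hN0 : 0 < N) (u : Fin N → ℂ) (hPSD : (ToepMat N u).PosSemidef) :
    ∃ (m : ℕ) (ζ : Fin m → ℂ) (d : Fin m → ℝ), m ≤ N ∧ Function.Injective ζ ∧
      (∀ k, ‖ζ k‖ = 1) ∧ (∀ k, 0 < d k) ∧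
      ∀ n : Fin N, u n = ∑ k, ((d k : ℝ) : ℂ) * ζ k ^ (n : ℕ) := by
  classical
  obtain ⟨B, hB⟩ : ∃ B : Matrix (Fin N) (Fin N) ℂ, ToepMat N u = Bᴴ * B := by
    open scoped MatrixOrder in
    obtain ⟨B, hB⟩ := CStarAlgebra.nonneg_iff_eq_star_mul_self.mp hPSD.nonneg
    exact ⟨B, hB⟩
  set c : Fin N → EuclideanSpace ℂ (Fin N) :=
    fun i => (WithLp.equiv 2 (Fin N → ℂ)).symm (fun r => B r i) with hc
  have hinner : ∀ i j, ⟪c i, c j⟫ = ToepMat N u i j := by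
    intro i j
    rw [hB]
    simp [hc, PiLp.inner_apply, RCLike.inner_apply, Matrix.mul_apply,
      Matrix.conjTranspose_apply]
    exact Finset.sum_congr rfl fun _ _ => mul_comm _ _
  have hshift : ∀ (i j : Fin N) (hi : (i : ℕ) + 1 < N) (hj : (j : ℕ) + 1 < N),
      ToepMat N u ⟨i + 1, hi⟩ ⟨j + 1, hj⟩ = ToepMat N u i j := by
    intro i j hi hj
    by_cases h : (i : ℕ) ≤ (j : ℕ)
    · rw [ToepMat, ToepMat]
      rw [if_pos (show (i:ℕ)+1 ≤ (j:ℕ)+1 by omega), if_pos h]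
      congr 1
      exact Fin.ext (by simp [Nat.succ_sub_succ])
    · rw [ToepMat, ToepMat]
      rw [if_neg (show ¬((i:ℕ)+1 ≤ (j:ℕ)+1) by omega), if_neg h]
      congr 2
      exact Fin.ext (by simp [Nat.succ_sub_succ])
  set em : Fin (N - 1) → Fin N := fun i => ⟨i.1, lt_of_lt_of_le i.2 (Nat.sub_le N 1)⟩ with hem
  set em' : Fin (N - 1) → Fin N := fun i => ⟨i.1 + 1, by have := i.2; omega⟩ with hem'
  obtain ⟨S, hSc⟩ := gram_isometry (fun i => c (em i)) (fun i => c (em' i)) (by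
    intro i j
    rw [hinner, hinner, hshift (em i) (em j) (by have := i.2; simp [hem]; omega)
      (by have := j.2; simp [hem]; omega)])
  have hpow : ∀ (n : ℕ) (h : n < N), c ⟨n, h⟩ = (S.toLinearMap ^ n) (c ⟨0, hN0⟩) := by
    intro n
    induction n with
    | zero => intro h; simp
    | succ n ih =>
      intro h
      have h' : n < N - 1 := by omega
      have h1 : (⟨n + 1, h⟩ : Fin N) = em' ⟨n, h'⟩ := rfl
      have h2 : (⟨n, lt_of_lt_of_le h' (Nat.sub_le N 1)⟩ : Fin N) = em ⟨n, h'⟩ := rfl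
      rw [h1, ← hSc ⟨n, h'⟩, ← h2, ih (lt_of_lt_of_le h' (Nat.sub_le N 1)),
        pow_succ', Module.End.mul_apply]
      rfl
  -- eigendecomposition of c0
  have htop := Module.End.iSup_maxGenEigenspace_eq_top (S.toLinearMap)
  have hc0 : c ⟨0, hN0⟩ ∈ (⊤ : Submodule ℂ (EuclideanSpace ℂ (Fin N))) := Submodule.mem_top
  rw [← htop, Submodule.mem_iSup_iff_exists_finsupp] at hc0
  obtain ⟨g, hg, hgsum⟩ := hc0
  have heig : ∀ μ, S (g μ) = μ • g μ := by
    intro μ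
    obtain ⟨k, hk⟩ := (Module.End.mem_maxGenEigenspace _ _ _).mp (hg μ)
    exact isometry_gen_eigen S μ k (g μ) hk
  have habsμ : ∀ μ, g μ ≠ 0 → ‖μ‖ = 1 := by
    intro μ hne
    have h1 : ‖S (g μ)‖ = ‖g μ‖ := S.norm_map _
    rw [heig μ, norm_smul] at h1
    have h2 := norm_ne_zero_iff.mpr hne
    field_simp at h1
    exact h1
  have hpow_eig : ∀ (μ : ℂ) (n : ℕ), (S.toLinearMap ^ n) (g μ) = μ ^ n • g μ := by
    intro μ n
    induction n with
    | zero => simp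
    | succ n ihn =>
      rw [pow_succ', Module.End.mul_apply, ihn, _root_.map_smul]
      have : S.toLinearMap (g μ) = S (g μ) := rfl
      rw [this, heig μ, smul_smul, ← pow_succ]
  have hform : ∀ n : Fin N, u n = ∑ μ ∈ g.support, ((‖g μ‖ ^ 2 : ℝ) : ℂ) * μ ^ (n : ℕ) := by
    intro n
    have hTn : ToepMat N u ⟨0, hN0⟩ n = u n := by
      rw [ToepMat, if_pos (Nat.zero_le _)]
      congr 1
    have h1 : u n = ⟪c ⟨0, hN0⟩, c n⟫ := by rw [hinner, hTn]
    have h2 : c n = (S.toLinearMap ^ (n : ℕ)) (c ⟨0, hN0⟩) := by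
      rw [← hpow n.1 n.2]
    have h3 : c ⟨0, hN0⟩ = ∑ μ ∈ g.support, g μ := by
      rw [← hgsum]; rfl
    rw [h1, h2, h3, map_sum]
    have h4 : ∀ μ ∈ g.support, (S.toLinearMap ^ (n : ℕ)) (g μ) = μ ^ (n : ℕ) • g μ :=
      fun μ _ => hpow_eig μ _
    rw [Finset.sum_congr rfl h4, sum_inner]
    refine Finset.sum_congr rfl fun μ hμ => ?_
    rw [inner_sum]
    rw [Finset.sum_eq_single μ (fun ν hν hνμ => by
        rw [inner_smul_right, eig_orth S (heig μ) (heig ν)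
          (habsμ μ (Finsupp.mem_support_iff.mp hμ)) (Ne.symm hνμ), mul_zero])
      (fun hμ' => absurd hμ hμ')]
    have h5 : ⟪g μ, g μ⟫ = ((‖g μ‖ ^ 2 : ℝ) : ℂ) := by
      rw [inner_self_eq_norm_sq_to_K]; norm_cast
    rw [inner_smul_right, h5, mul_comm]
  -- cardinality bound
  have hcard : g.support.card ≤ N := by
    have horth : Orthonormal ℂ
        (fun μ : ↥g.support => ((‖g ↑μ‖⁻¹ : ℝ) : ℂ) • g ↑μ) := by
      rw [orthonormal_iff_ite]
      intro i j
      by_cases hij : i = j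
      · subst hij
        rw [if_pos rfl, inner_smul_left, inner_smul_right, inner_self_eq_norm_sq_to_K,
          Complex.conj_ofReal]
        have hne : ‖g ↑i‖ ≠ 0 :=
          norm_ne_zero_iff.mpr (Finsupp.mem_support_iff.mp i.2)
        have hne' : ((‖g ↑i‖ : ℝ) : ℂ) ≠ 0 := by exact_mod_cast hne
        field_simp
        all_goals (push_cast; field_simp; norm_cast)
      · rw [if_neg hij, inner_smul_left, inner_smul_right]
        have hμν : (↑i : ℂ) ≠ ↑j := fun h => hij (Subtype.ext h)
        rw [eig_orth S (heig ↑i) (heig ↑j)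
          (habsμ ↑i (Finsupp.mem_support_iff.mp i.2)) hμν]
        simp
    have h5 := horth.linearIndependent.fintype_card_le_finrank
    rwa [Fintype.card_coe, finrank_euclideanSpace_fin] at h5
  -- enumeration
  set eqv := g.support.equivFin with heqv
  refine ⟨g.support.card, fun k => (↑(eqv.symm k) : ℂ), fun k => ‖g ↑(eqv.symm k)‖ ^ 2,
    hcard, ?_, ?_, ?_, ?_⟩
  · intro k1 k2 hk
    exact eqv.symm.injective (Subtype.ext hk)
  · intro k
    exact habsμ _ (Finsupp.mem_support_iff.mp (eqv.symm k).2)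
  · intro k
    exact pow_pos (norm_pos_iff.mpr (Finsupp.mem_support_iff.mp (eqv.symm k).2)) 2
  · intro n
    rw [hform n, ← Finset.sum_coe_sort g.support
      (fun μ => ((‖g μ‖ ^ 2 : ℝ) : ℂ) * (μ : ℂ) ^ (n : ℕ)),
      ← Equiv.sum_comp eqv.symm
      (fun x : ↥g.support => ((‖g ↑x‖ ^ 2 : ℝ) : ℂ) * (↑x : ℂ) ^ (n : ℕ))]

lemma toep_entry (N m : ℕ) (u : Fin N → ℂ) (ζ : Fin m → ℂ) (d : Fin m → ℝ)
    (habs : ∀ k, ‖ζ k‖ = 1)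
    (hu : ∀ n : Fin N, u n = ∑ k, ((d k : ℝ) : ℂ) * ζ k ^ (n : ℕ)) :
    ∀ i j : Fin N, ToepMat N u i j =
      ∑ k, ((d k : ℝ) : ℂ) * ((starRingEnd ℂ) (ζ k)) ^ (i : ℕ) * ζ k ^ (j : ℕ) := by
  intro i j
  rw [ToepMat]
  by_cases h : (i : ℕ) ≤ (j : ℕ)
  · rw [if_pos h, hu]
    refine Finset.sum_congr rfl fun k _ => ?_
    rw [mul_assoc, conj_pow_mul_pow (habs k) h]
  · rw [if_neg h, hu, map_sum]
    refine Finset.sum_congr rfl fun k _ => ?_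
    rw [_root_.map_mul, _root_.map_pow, Complex.conj_ofReal, mul_assoc,
      conj_pow_mul_pow' (habs k) (le_of_not_ge h)]

set_option maxHeartbeats 1000000 in
lemma rank_eq_atoms (N m : ℕ) (u : Fin N → ℂ) (ζ : Fin m → ℂ) (d : Fin m → ℝ)
    (hmN : m ≤ N) (hinj : Function.Injective ζ) (habs : ∀ k, ‖ζ k‖ = 1)
    (hd : ∀ k, 0 < d k)
    (hu : ∀ n : Fin N, u n = ∑ k, ((d k : ℝ) : ℂ) * ζ k ^ (n : ℕ)) :
    (ToepMat N u).rank = m := by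
  classical
  have hmaster := toep_entry N m u ζ d habs hu
  set V : Matrix (Fin m) (Fin N) ℂ :=
    Matrix.of (fun k n => ((Real.sqrt (d k) : ℝ) : ℂ) * ζ k ^ (n : ℕ)) with hV
  have hA : ToepMat N u = Vᴴ * V := by
    ext i j
    rw [hmaster i j, Matrix.mul_apply]
    refine Finset.sum_congr rfl fun k _ => ?_
    rw [Matrix.conjTranspose_apply, hV]
    simp only [Matrix.of_apply]
    simp only [star_mul', star_pow, Complex.star_def, Complex.conj_ofReal]
    have hdd : ((Real.sqrt (d k) : ℝ) : ℂ) * ((Real.sqrt (d k) : ℝ) : ℂ) = ((d k : ℝ) : ℂ) := by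
      rw [← Complex.ofReal_mul, Real.mul_self_sqrt (hd k).le]
    linear_combination (-((starRingEnd ℂ) (ζ k) ^ (i : ℕ) * ζ k ^ (j : ℕ))) * hdd
  have hup : (ToepMat N u).rank ≤ m := by
    rw [hA, Matrix.rank_conjTranspose_mul_self]
    exact (Matrix.rank_le_card_height V).trans (by simp)
  set ι : Fin m → Fin N := Fin.castLE hmN with hι
  set P := Matrix.vandermonde ζ with hP
  set G : Matrix (Fin m) (Fin m) ℂ := (ToepMat N u).submatrix ι ι with hGdef
  have hG : G = Pᴴ * (Matrix.diagonal (fun k => ((d k : ℝ) : ℂ)) * P) := by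
    ext i j
    rw [hGdef, Matrix.submatrix_apply, hmaster, Matrix.mul_apply]
    refine Finset.sum_congr rfl fun k _ => ?_
    rw [Matrix.conjTranspose_apply, Matrix.diagonal_mul, hP]
    simp only [Matrix.vandermonde_apply, hι, Fin.coe_castLE]
    simp only [star_pow, Complex.star_def]
    ring
  have hPdet : P.det ≠ 0 := Matrix.det_vandermonde_ne_zero_iff.mpr hinj
  have hdet : G.det ≠ 0 := by
    rw [hG, Matrix.det_mul, Matrix.det_mul, Matrix.det_conjTranspose, Matrix.det_diagonal]
    refine mul_ne_zero (star_ne_zero.mpr hPdet) (mul_ne_zero ?_ hPdet)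
    exact Finset.prod_ne_zero_iff.mpr fun k _ => Complex.ofReal_ne_zero.mpr (hd k).ne'
  have hGrank : G.rank = m := by
    rw [Matrix.rank_of_isUnit G ((Matrix.isUnit_iff_isUnit_det G).mpr
      (isUnit_iff_ne_zero.mpr hdet))]
    simp
  set E1 : Matrix (Fin m) (Fin N) ℂ := Matrix.of (fun k n => if ι k = n then 1 else 0) with hE1
  set E2 : Matrix (Fin N) (Fin m) ℂ := Matrix.of (fun n k => if n = ι k then 1 else 0) with hE2
  have hGE : G = E1 * (ToepMat N u * E2) := by
    ext i j
    rw [hGdef, Matrix.submatrix_apply, Matrix.mul_apply]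
    simp only [hE1, hE2, Matrix.of_apply, Matrix.mul_apply, ite_mul, one_mul, zero_mul,
      mul_ite, mul_one, mul_zero]
    rw [Finset.sum_ite_eq (Finset.univ : Finset (Fin N)) (ι i)]
    simp
  have hlow : m ≤ (ToepMat N u).rank := by
    calc m = G.rank := hGrank.symm
    _ ≤ (ToepMat N u * E2).rank := by rw [hGE]; exact Matrix.rank_mul_le_right _ _
    _ ≤ (ToepMat N u).rank := Matrix.rank_mul_le_left _ _
  omega


/-- Existence of the irregular Vandermonde decomposition: with
`U = {m·f : m ∈ M, f ∈ F}` listed increasingly and `Toep(u) ⪰ 0` of rank `K`,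
`T(u)` is an `(N_u, K)`-irregular Toeplitz matrix:
`T(u) = W(γ,z)·diag(d)·W(γ,z)ᴴ` for distinct unimodular `z_1,…,z_K` and `d_k > 0`,
where `γ = (U_1,…,U_{N_u})`. -/
theorem stmt6 (N_M N_F : ℕ) (hM : 1 ≤ N_M) (hF : 1 ≤ N_F)
    (M F : Finset ℕ) (hMsub : ∀ m ∈ M, m ≤ N_M - 1) (hFsub : ∀ f ∈ F, 1 ≤ f ∧ f ≤ N_F)
    (N : ℕ) (hN : N = N_F * (N_M - 1) + 1)
    (N_u : ℕ) (U : Fin N_u → Fin N) (hUmono : StrictMono U)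
    (hUset : ∀ n : Fin N, (∃ i, U i = n) ↔ ∃ m ∈ M, ∃ f ∈ F, m * f = (n : ℕ))
    (u : Fin N → ℂ) (hPSD : (ToepMat N u).PosSemidef)
    (K : ℕ) (hK : K = (ToepMat N u).rank) :
    ∃ (z : Fin K → ℂ) (d : Fin K → ℝ),
      Function.Injective z ∧ (∀ k, ‖z k‖ = 1) ∧ (∀ k, 0 < d k) ∧
      ∀ i j, Tirr N N_u U u i j =
        ∑ k, (d k : ℂ) * (z k ^ ((U i) : ℕ)) * (starRingEnd ℂ) (z k ^ ((U j) : ℕ)) := by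
  have hN0 : 0 < N := by omega
  obtain ⟨m, ζ, d, hmN, hinj, habs, hd, hu⟩ := exists_atoms N hN0 u hPSD
  have hm : m = K := by rw [hK, rank_eq_atoms N m u ζ d hmN hinj habs hd hu]
  subst hm
  refine ⟨fun k => (starRingEnd ℂ) (ζ k), d, ?_, ?_, hd, ?_⟩
  · intro a b hab
    exact hinj ((starRingEnd ℂ).injective hab)
  · intro k; rw [Complex.norm_conj]; exact habs k
  · intro i j
    have hthis := toep_entry N m u ζ d habs hu (U i) (U j)
    rw [show Tirr N N_u U u i j = ToepMat N u (U i) (U j) from rfl, hthis]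
    refine Finset.sum_congr rfl fun k _ => ?_
    rw [map_pow, Complex.conj_conj]
end
end

section
/- Let N be a positive integer and let T ∈ ℂ^{N×N} be a positive semidefinite Hermitian Toeplitz matrix (i.e., T = Toep(u) for some u ∈ ℂ^N) with rank K. Then T admits a Vandermonde decomposition: there exist distinct z_1,…,z_K ∈ ℂ with |z_k| = 1 and positive reals d_1,…,d_K such that T = ∑_{k=1}^K d_k · v_N(z_k) · v_N(z_k)^H. -/
open Matrix BigOperators
open scoped ComplexOrder

noncomputable section

namespace VandAux
open Polynomial


def IsToep (N : ℕ) (T : Matrix (Fin N) (Fin N) ℂ) : Prop :=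
  ∀ i j i' j' : Fin N, (i : ℕ) + (j' : ℕ) = (i' : ℕ) + (j : ℕ) → T i j = T i' j'

lemma isToep_toepMat (N : ℕ) (u : Fin N → ℂ) : IsToep N (ToepMat N u) := by
  intro i j i' j' h
  unfold ToepMat
  rcases le_or_gt (i : ℕ) (j : ℕ) with hij | hij
  · rw [if_pos hij, if_pos (by omega)]
    congr 1
    simp only [Fin.mk.injEq]
    omega
  · rw [if_neg (by omega), if_neg (by omega)]
    congr 2
    simp only [Fin.mk.injEq]
    omega


lemma herm_dot {N : ℕ} {M : Matrix (Fin N) (Fin N) ℂ} (hM : M.IsHermitian)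
    (x y : Fin N → ℂ) :
    star x ⬝ᵥ M *ᵥ y = (starRingEnd ℂ) (star y ⬝ᵥ M *ᵥ x) := by
  have h : (starRingEnd ℂ) (star y ⬝ᵥ M *ᵥ x) = star (star y ⬝ᵥ M *ᵥ x) := rfl
  rw [h, star_dotProduct, star_mulVec, hM.eq, ← dotProduct_mulVec]

/-- If `v` is orthogonal (w.r.t. `star x ⬝ᵥ v`) to the kernel of a Hermitian matrix,
then `v` is in its range. -/
lemma mem_range_of_perp_ker {N : ℕ} {M : Matrix (Fin N) (Fin N) ℂ} (hM : M.IsHermitian)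
    {v : Fin N → ℂ} (hv : ∀ x, M *ᵥ x = 0 → star x ⬝ᵥ v = 0) :
    v ∈ LinearMap.range M.mulVecLin := by
  classical
  set E := EuclideanSpace ℂ (Fin N) with hE
  let eL : E ≃ₗ[ℂ] (Fin N → ℂ) := WithLp.linearEquiv 2 ℂ (Fin N → ℂ)
  let f : E →ₗ[ℂ] E := (eL.symm.toLinearMap.comp M.mulVecLin).comp eL.toLinearMap
  have hf : ∀ x : E, f x = eL.symm (M *ᵥ (eL x)) := fun _ => rfl
  have hker : ∀ x : E, x ∈ LinearMap.ker f ↔ M *ᵥ (eL x) = 0 := by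
    intro x
    rw [LinearMap.mem_ker, hf]
    exact LinearEquiv.map_eq_zero_iff _
  have hrange : LinearMap.range f = (LinearMap.ker f)ᗮ := by
    apply Submodule.eq_of_le_of_finrank_le
    · rintro _ ⟨y, rfl⟩
      rw [Submodule.mem_orthogonal]
      intro x hx
      rw [hker] at hx
      have : (inner ℂ x (f y) : ℂ) = star (eL x) ⬝ᵥ (eL (f y)) :=
        (EuclideanSpace.inner_eq_star_dotProduct _ _).trans (dotProduct_comm _ _)
      rw [this]
      have h2 : eL (f y) = M *ᵥ (eL y) := by
        rw [hf]; exact eL.apply_symm_apply _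
      rw [h2, herm_dot hM, hx]
      simp
    · have h1 : Module.finrank ℂ (LinearMap.ker f) + Module.finrank ℂ (LinearMap.ker f)ᗮ
          = Module.finrank ℂ E := Submodule.finrank_add_finrank_orthogonal _
      have h2 := LinearMap.finrank_range_add_finrank_ker f
      omega
  have hvmem : eL.symm v ∈ (LinearMap.ker f)ᗮ := by
    rw [Submodule.mem_orthogonal]
    intro x hx
    rw [hker] at hx
    have : (inner ℂ x (eL.symm v) : ℂ) = star (eL x) ⬝ᵥ (eL (eL.symm v)) :=
      (EuclideanSpace.inner_eq_star_dotProduct _ _).trans (dotProduct_comm _ _)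
    rw [this, eL.apply_symm_apply]
    exact hv _ hx
  rw [← hrange] at hvmem
  obtain ⟨y, hy⟩ := hvmem
  refine ⟨eL y, ?_⟩
  have := congrArg eL hy
  rw [hf] at this
  rw [eL.apply_symm_apply, eL.apply_symm_apply] at this
  exact this



/-- polynomial with coefficient vector `x`. -/
def pOf (N : ℕ) (x : Fin N → ℂ) : Polynomial ℂ :=
  ∑ i : Fin N, Polynomial.C (x i) * Polynomial.X ^ (i : ℕ)

lemma coeff_pOf {N : ℕ} (x : Fin N → ℂ) (n : ℕ) :
    (pOf N x).coeff n = if h : n < N then x ⟨n, h⟩ else 0 := by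
  unfold pOf
  rw [Polynomial.finset_sum_coeff]
  simp only [Polynomial.coeff_C_mul, Polynomial.coeff_X_pow, mul_ite, mul_one, mul_zero]
  rcases lt_or_ge n N with h | h
  · rw [dif_pos h, Finset.sum_eq_single (⟨n, h⟩ : Fin N)]
    · simp
    · intro b _ hb
      rw [if_neg]
      intro hnb
      exact hb (Fin.val_injective hnb.symm)
    · intro hmem; exact absurd (Finset.mem_univ _) hmem
  · rw [dif_neg (by omega), Finset.sum_eq_zero]
    intro i _
    rw [if_neg]
    have := i.isLt
    omega

lemma natDegree_pOf_le {N : ℕ} (hN : 0 < N) (x : Fin N → ℂ) :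
    (pOf N x).natDegree ≤ N - 1 := by
  rw [Polynomial.natDegree_le_iff_coeff_eq_zero]
  intro m hm
  rw [coeff_pOf, dif_neg (by omega)]

lemma pOf_inj {N : ℕ} {x y : Fin N → ℂ} (h : pOf N x = pOf N y) : x = y := by
  funext i
  have := congrArg (fun p => Polynomial.coeff p (i : ℕ)) h
  simpa [coeff_pOf, i.isLt] using this

lemma pOf_eq_zero_iff {N : ℕ} {x : Fin N → ℂ} : pOf N x = 0 ↔ x = 0 := by
  constructor
  · intro h
    have : pOf N x = pOf N 0 := by
      rw [h]; unfold pOf; simp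
    exact pOf_inj this
  · intro h; subst h; unfold pOf; simp

lemma pOf_recover {N : ℕ} {f : Polynomial ℂ} (hf : f.natDegree < N) :
    pOf N (fun i => f.coeff (i : ℕ)) = f := by
  apply Polynomial.ext
  intro n
  rw [coeff_pOf]
  rcases lt_or_ge n N with h | h
  · rw [dif_pos h]
  · rw [dif_neg (by omega)]
    exact (Polynomial.coeff_eq_zero_of_natDegree_lt (by omega)).symm

lemma pOf_smul {N : ℕ} (c : ℂ) (x : Fin N → ℂ) :
    pOf N (c • x) = Polynomial.C c * pOf N x := by
  unfold pOf
  rw [Finset.mul_sum]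
  apply Finset.sum_congr rfl
  intro i _
  simp [mul_assoc]

lemma pOf_sub {N : ℕ} (x y : Fin N → ℂ) : pOf N (x - y) = pOf N x - pOf N y := by
  unfold pOf
  rw [← Finset.sum_sub_distrib]
  apply Finset.sum_congr rfl
  intro i _
  simp [sub_mul]

lemma pOf_eval {N : ℕ} (x : Fin N → ℂ) (z : ℂ) :
    (pOf N x).eval z = ∑ i : Fin N, x i * z ^ (i : ℕ) := by
  unfold pOf
  rw [Polynomial.eval_finset_sum]
  simp




/-- autocorrelation at lag `d`. -/
def rho (N : ℕ) (x : Fin N → ℂ) (d : ℤ) : ℂ :=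
  ∑ p ∈ Finset.univ.filter
      (fun p : Fin N × Fin N => ((p.2 : ℕ) : ℤ) - ((p.1 : ℕ) : ℤ) = d),
    (starRingEnd ℂ) (x p.1) * x p.2

/-- quadratic form. -/
def Qf (N : ℕ) (T : Matrix (Fin N) (Fin N) ℂ) (x : Fin N → ℂ) : ℂ :=
  ∑ p : Fin N × Fin N, (starRingEnd ℂ) (x p.1) * T p.1 p.2 * x p.2

lemma Qf_eq_dot {N : ℕ} (T : Matrix (Fin N) (Fin N) ℂ) (x : Fin N → ℂ) :
    Qf N T x = star x ⬝ᵥ T *ᵥ x := by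
  unfold Qf
  rw [← Finset.univ_product_univ, Finset.sum_product]
  unfold dotProduct Matrix.mulVec dotProduct
  apply Finset.sum_congr rfl
  intro i _
  rw [Finset.mul_sum]
  apply Finset.sum_congr rfl
  intro j _
  simp [Pi.star_apply, mul_assoc]

lemma Qf_congr {N : ℕ} {T : Matrix (Fin N) (Fin N) ℂ} (hT : IsToep N T)
    {x y : Fin N → ℂ} (h : ∀ d : ℤ, rho N x d = rho N y d) :
    Qf N T x = Qf N T y := by
  classical
  unfold Qf
  have key : ∀ w : Fin N → ℂ,
      ∑ p : Fin N × Fin N, (starRingEnd ℂ) (w p.1) * T p.1 p.2 * w p.2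
      = ∑ d ∈ Finset.Icc (-(N : ℤ)) (N : ℤ), ∑ p ∈ Finset.univ.filter
          (fun p : Fin N × Fin N => ((p.2 : ℕ) : ℤ) - ((p.1 : ℕ) : ℤ) = d),
          (starRingEnd ℂ) (w p.1) * T p.1 p.2 * w p.2 := by
    intro w
    rw [Finset.sum_fiberwise_of_maps_to]
    intro p _
    have h1 := p.1.isLt
    have h2 := p.2.isLt
    rw [Finset.mem_Icc]
    omega
  rw [key x, key y]
  apply Finset.sum_congr rfl
  intro d _
  rcases Finset.eq_empty_or_nonempty (Finset.univ.filter
      (fun p : Fin N × Fin N => ((p.2 : ℕ) : ℤ) - ((p.1 : ℕ) : ℤ) = d)) with he | ⟨p0, hp0⟩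
  · rw [he]
    simp
  · have hfac : ∀ w : Fin N → ℂ,
        ∑ p ∈ Finset.univ.filter
          (fun p : Fin N × Fin N => ((p.2 : ℕ) : ℤ) - ((p.1 : ℕ) : ℤ) = d),
          (starRingEnd ℂ) (w p.1) * T p.1 p.2 * w p.2
        = T p0.1 p0.2 * rho N w d := by
      intro w
      unfold rho
      rw [Finset.mul_sum]
      apply Finset.sum_congr rfl
      intro p hp
      rw [Finset.mem_filter] at hp hp0
      rw [hT p.1 p.2 p0.1 p0.2 (by omega)]
      ring
    rw [hfac x, hfac y, h d]

lemma coeff_aux (a b : ℂ) (p q n : ℕ) :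
    (Polynomial.C a * Polynomial.X ^ p * (Polynomial.C b * Polynomial.X ^ q)).coeff n
      = if n = p + q then a * b else 0 := by
  have h : Polynomial.C a * Polynomial.X ^ p * (Polynomial.C b * Polynomial.X ^ q)
      = Polynomial.C (a * b) * Polynomial.X ^ (p + q) := by
    rw [Polynomial.C_mul, pow_add]; ring
  rw [h, Polynomial.coeff_C_mul, Polynomial.coeff_X_pow, mul_ite, mul_one, mul_zero]





def qOf (N : ℕ) (x : Fin N → ℂ) : Polynomial ℂ :=
  ∑ i : Fin N, Polynomial.C ((starRingEnd ℂ) (x i)) * Polynomial.X ^ (N - 1 - (i : ℕ))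

lemma reflect_pOf {N : ℕ} (hN : 0 < N) (x : Fin N → ℂ) :
    Polynomial.reflect (N - 1) ((pOf N x).map (starRingEnd ℂ)) = qOf N x := by
  apply Polynomial.ext
  intro n
  rw [Polynomial.coeff_reflect, Polynomial.coeff_map, coeff_pOf]
  unfold qOf
  rw [Polynomial.finset_sum_coeff]
  simp only [Polynomial.coeff_C_mul, Polynomial.coeff_X_pow, mul_ite, mul_one, mul_zero]
  rcases le_or_gt n (N - 1) with h | h
  · rw [Polynomial.revAt_le h, dif_pos (by omega)]
    rw [Finset.sum_eq_single (⟨N - 1 - n, by omega⟩ : Fin N)]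
    · rw [if_pos (by simp; omega)]
    · intro b _ hb
      rw [if_neg]
      intro hnb
      apply hb
      apply Fin.val_injective
      have := b.isLt
      simp
      omega
    · intro hmem; exact absurd (Finset.mem_univ _) hmem
  · rw [Polynomial.revAt_eq_self_of_lt (by omega), dif_neg (by omega)]
    rw [Finset.sum_eq_zero]
    · simp
    · intro b _
      rw [if_neg]
      have := b.isLt
      omega


lemma coeff_pOf_mul_qOf {N : ℕ} (hN : 0 < N) (x : Fin N → ℂ) (n : ℕ) :
    (pOf N x * qOf N x).coeff n = rho N x ((n : ℤ) + 1 - N) := by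
  unfold pOf qOf rho
  rw [Finset.sum_mul_sum]
  rw [Polynomial.finset_sum_coeff]
  simp only [Polynomial.finset_sum_coeff, coeff_aux]
  rw [Finset.sum_filter, ← Finset.univ_product_univ, Finset.sum_product]
  rw [Finset.sum_comm]
  apply Finset.sum_congr rfl
  intro i _
  apply Finset.sum_congr rfl
  intro j _
  have hi := i.isLt
  have hj := j.isLt
  by_cases hc : ((j : ℕ) : ℤ) - ((i : ℕ) : ℤ) = (n : ℤ) + 1 - N
  · rw [if_pos (by omega), if_pos hc]
    ring
  · rw [if_neg (by omega), if_neg hc]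

lemma rho_zero_of_lt {N : ℕ} (x : Fin N → ℂ) {d : ℤ} (hd : d < 1 - N) :
    rho N x d = 0 := by
  unfold rho
  rw [Finset.filter_false_of_mem, Finset.sum_empty]
  intro p _
  have h1 := p.1.isLt
  have h2 := p.2.isLt
  omega

lemma rho_congr_of_prod {N : ℕ} (hN : 0 < N) {x y : Fin N → ℂ}
    (hprod : pOf N x * qOf N x = pOf N y * qOf N y) (d : ℤ) :
    rho N x d = rho N y d := by
  rcases lt_or_ge d (1 - N) with h | h
  · rw [rho_zero_of_lt x h, rho_zero_of_lt y h]
  · obtain ⟨n, hn⟩ : ∃ n : ℕ, (n : ℤ) + 1 - N = d := ⟨(d + N - 1).toNat, by omega⟩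
    rw [← hn, ← coeff_pOf_mul_qOf hN x n, ← coeff_pOf_mul_qOf hN y n, hprod]

lemma reflect_one_linear (a b : ℂ) :
    Polynomial.reflect 1 (Polynomial.C a + Polynomial.C b * Polynomial.X)
      = Polynomial.C b + Polynomial.C a * Polynomial.X := by
  have h : Polynomial.C a + Polynomial.C b * Polynomial.X
      = Polynomial.C a * Polynomial.X ^ 0 + Polynomial.C b * Polynomial.X ^ 1 := by
    rw [pow_zero, pow_one, mul_one]
  rw [h, Polynomial.reflect_add, Polynomial.reflect_C_mul_X_pow,
    Polynomial.reflect_C_mul_X_pow, Polynomial.revAt_le (by norm_num),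
    Polynomial.revAt_le (le_refl 1)]
  rw [Nat.sub_zero, Nat.sub_self, pow_zero, pow_one, mul_one]
  ring

lemma reflect_X_sub_C (c : ℂ) :
    Polynomial.reflect 1 (Polynomial.X - Polynomial.C c)
      = 1 - Polynomial.C c * Polynomial.X := by
  have h : Polynomial.X - Polynomial.C c
      = Polynomial.C (-c) + Polynomial.C 1 * Polynomial.X := by
    rw [Polynomial.C_neg, Polynomial.C_1]; ring
  rw [h, reflect_one_linear, Polynomial.C_neg, Polynomial.C_1]
  ring

lemma reflect_one_sub_CX (c : ℂ) :
    Polynomial.reflect 1 (1 - Polynomial.C c * Polynomial.X)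
      = Polynomial.X - Polynomial.C c := by
  have h : 1 - Polynomial.C c * Polynomial.X
      = Polynomial.C 1 + Polynomial.C (-c) * Polynomial.X := by
    rw [Polynomial.C_neg, Polynomial.C_1]; ring
  rw [h, reflect_one_linear, Polynomial.C_neg, Polynomial.C_1]
  ring

lemma reflect_X' : Polynomial.reflect 1 (Polynomial.X : Polynomial ℂ) = 1 := by
  have h : (Polynomial.X : Polynomial ℂ) = Polynomial.C 0 + Polynomial.C 1 * Polynomial.X := by
    rw [Polynomial.C_0, Polynomial.C_1]; ring
  rw [h, reflect_one_linear, Polynomial.C_0, Polynomial.C_1]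
  ring

lemma reflect_one' : Polynomial.reflect 1 (1 : Polynomial ℂ) = Polynomial.X := by
  have h : (1 : Polynomial ℂ) = Polynomial.C 1 + Polynomial.C 0 * Polynomial.X := by
    rw [Polynomial.C_0, Polynomial.C_1]; ring
  rw [h, reflect_one_linear, Polynomial.C_0, Polynomial.C_1]
  ring

lemma natDegree_one_sub_CX_le (c : ℂ) :
    (1 - Polynomial.C c * Polynomial.X).natDegree ≤ 1 := by
  apply le_trans (Polynomial.natDegree_sub_le _ _)
  simp [Polynomial.natDegree_C_mul_le]
  exact le_trans (Polynomial.natDegree_mul_le) (by simp)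

lemma key_prod_shift {N : ℕ} (hN2 : 2 ≤ N) {f : Polynomial ℂ}
    (hf : f.natDegree ≤ N - 2) :
    (Polynomial.X * f) * Polynomial.reflect (N - 1)
        ((Polynomial.X * f).map (starRingEnd ℂ))
      = f * Polynomial.reflect (N - 1) (f.map (starRingEnd ℂ)) := by
  have hN1 : N - 1 = 1 + (N - 2) := by omega
  have hfm : (f.map (starRingEnd ℂ)).natDegree ≤ N - 2 :=
    le_trans Polynomial.natDegree_map_le hf
  have h1 : (Polynomial.X * f).map (starRingEnd ℂ)
      = Polynomial.X * f.map (starRingEnd ℂ) := by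
    rw [Polynomial.map_mul, Polynomial.map_X]
  rw [h1, hN1]
  rw [Polynomial.reflect_mul _ _ Polynomial.natDegree_X_le hfm]
  have h2 : Polynomial.reflect (1 + (N - 2)) (f.map (starRingEnd ℂ))
      = Polynomial.X * Polynomial.reflect (N - 2) (f.map (starRingEnd ℂ)) := by
    have h3 : f.map (starRingEnd ℂ) = 1 * f.map (starRingEnd ℂ) := (one_mul _).symm
    conv_lhs => rw [h3]
    rw [Polynomial.reflect_mul _ _ (by simp) hfm, reflect_one']
  rw [h2, reflect_X']
  ring

lemma key_prod_swap {N : ℕ} (hN2 : 2 ≤ N) (z0 : ℂ) {g : Polynomial ℂ}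
    (hg : g.natDegree ≤ N - 2) :
    ((Polynomial.X - Polynomial.C z0) * g) * Polynomial.reflect (N - 1)
        (((Polynomial.X - Polynomial.C z0) * g).map (starRingEnd ℂ))
      = ((1 - Polynomial.C ((starRingEnd ℂ) z0) * Polynomial.X) * g)
          * Polynomial.reflect (N - 1)
        (((1 - Polynomial.C ((starRingEnd ℂ) z0) * Polynomial.X) * g).map (starRingEnd ℂ)) := by
  have hN1 : N - 1 = 1 + (N - 2) := by omega
  have hgm : (g.map (starRingEnd ℂ)).natDegree ≤ N - 2 :=
    le_trans Polynomial.natDegree_map_le hg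
  have h1 : ((Polynomial.X - Polynomial.C z0) * g).map (starRingEnd ℂ)
      = (Polynomial.X - Polynomial.C ((starRingEnd ℂ) z0)) * g.map (starRingEnd ℂ) := by
    rw [Polynomial.map_mul, Polynomial.map_sub, Polynomial.map_X, Polynomial.map_C]
  have h2 : ((1 - Polynomial.C ((starRingEnd ℂ) z0) * Polynomial.X) * g).map (starRingEnd ℂ)
      = (1 - Polynomial.C z0 * Polynomial.X) * g.map (starRingEnd ℂ) := by
    rw [Polynomial.map_mul, Polynomial.map_sub, Polynomial.map_one, Polynomial.map_mul,
      Polynomial.map_X, Polynomial.map_C]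
    simp [Complex.conj_conj]
  rw [h1, h2, hN1]
  rw [Polynomial.reflect_mul _ _ (Polynomial.natDegree_X_sub_C_le _) hgm]
  rw [Polynomial.reflect_mul _ _ (natDegree_one_sub_CX_le _) hgm]
  rw [reflect_X_sub_C, reflect_one_sub_CX]
  ring


lemma ker_shift {N : ℕ} (hN2 : 2 ≤ N) {T : Matrix (Fin N) (Fin N) ℂ} (hToep : IsToep N T)
    (hPSD : T.PosSemidef) {x : Fin N → ℂ} (hx : T *ᵥ x = 0)
    (hdeg : (pOf N x).natDegree ≤ N - 2) :
    T *ᵥ (fun i : Fin N => (Polynomial.X * pOf N x).coeff (i : ℕ)) = 0 := by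
  set y : Fin N → ℂ := fun i : Fin N => (Polynomial.X * pOf N x).coeff (i : ℕ) with hy
  have hdegX : (Polynomial.X * pOf N x).natDegree ≤ N - 1 :=
    le_trans Polynomial.natDegree_mul_le (by simp [Polynomial.natDegree_X]; omega)
  have hrec : pOf N y = Polynomial.X * pOf N x := pOf_recover (by omega)
  have hprod : pOf N y * qOf N y = pOf N x * qOf N x := by
    rw [← reflect_pOf (by omega : 0 < N) y, ← reflect_pOf (by omega : 0 < N) x, hrec]
    exact key_prod_shift hN2 hdeg
  have h0 : Qf N T y = 0 := by
    rw [Qf_congr hToep (rho_congr_of_prod (by omega : 0 < N) hprod), Qf_eq_dot, hx]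
    simp
  exact (hPSD.dotProduct_mulVec_zero_iff y).mp (by rw [← Qf_eq_dot]; exact h0)

lemma exists_unimodular_in_range {N : ℕ} (hN : 0 < N) {T : Matrix (Fin N) (Fin N) ℂ}
    (hToep : IsToep N T) (hPSD : T.PosSemidef) (hrank0 : T.rank ≠ 0) (hrankN : T.rank < N) :
    ∃ z : ℂ, ‖z‖ = 1 ∧ vN N z ∈ LinearMap.range T.mulVecLin := by
  classical
  -- kernel is nontrivial
  have hkerne : ∃ x0 : Fin N → ℂ, T *ᵥ x0 = 0 ∧ x0 ≠ 0 := by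
    by_contra hcon
    push_neg at hcon
    have hbot : LinearMap.ker T.mulVecLin = ⊥ := by
      rw [LinearMap.ker_eq_bot']
      intro x hx
      exact hcon x hx
    have := LinearMap.finrank_range_add_finrank_ker T.mulVecLin
    rw [hbot, finrank_bot] at this
    have : T.rank = N := by
      have hfr : Module.finrank ℂ (Fin N → ℂ) = N := by simp
      unfold Matrix.rank
      omega
    omega
  obtain ⟨x0, hx0ker, hx0ne⟩ := hkerne
  -- minimal degree kernel element
  have hP : ∃ n : ℕ, ∃ x : Fin N → ℂ, T *ᵥ x = 0 ∧ x ≠ 0 ∧ (pOf N x).natDegree ≤ n :=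
    ⟨(pOf N x0).natDegree, x0, hx0ker, hx0ne, le_rfl⟩
  set m := Nat.find hP with hm
  obtain ⟨a, haker, hane, hadeg⟩ := Nat.find_spec hP
  have hmin : ∀ x : Fin N → ℂ, T *ᵥ x = 0 → x ≠ 0 → m ≤ (pOf N x).natDegree := by
    intro x hx hxne
    by_contra hlt
    push_neg at hlt
    exact Nat.find_min hP hlt ⟨x, hx, hxne, le_rfl⟩
  have hpane : pOf N a ≠ 0 := fun h => hane (pOf_eq_zero_iff.mp h)
  have hadeg' : (pOf N a).natDegree = m := le_antisymm hadeg (hmin a haker hane)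
  have hdegN : (pOf N a).natDegree ≤ N - 1 := natDegree_pOf_le hN a
  -- m ≥ 1
  have hm1 : 1 ≤ m := by
    by_contra hm0
    push_neg at hm0
    interval_cases m
    -- pOf a has degree 0, so a is supported at 0
    have hsupp : ∀ i : Fin N, (i : ℕ) ≠ 0 → a i = 0 := by
      intro i hi
      have h1 : (pOf N a).coeff (i : ℕ) = 0 :=
        Polynomial.coeff_eq_zero_of_natDegree_lt (by omega)
      rw [coeff_pOf, dif_pos i.isLt] at h1
      simpa using h1
    have ha00 : a ⟨0, hN⟩ ≠ 0 := by
      intro h0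
      apply hane
      funext i
      by_cases hi : (i : ℕ) = 0
      · have : i = ⟨0, hN⟩ := Fin.val_injective hi
        rw [this, h0]; rfl
      · exact hsupp i hi
    -- first column of T vanishes
    have hcol : ∀ i : Fin N, T i ⟨0, hN⟩ = 0 := by
      intro i
      have := congrFun haker i
      have hexp : (T *ᵥ a) i = T i ⟨0, hN⟩ * a ⟨0, hN⟩ := by
        unfold Matrix.mulVec dotProduct
        rw [Finset.sum_eq_single (⟨0, hN⟩ : Fin N)]
        · intro b _ hb
          rw [hsupp b (fun h => hb (Fin.val_injective h)), mul_zero]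
        · intro hmem; exact absurd (Finset.mem_univ _) hmem
      rw [hexp] at this
      exact (mul_eq_zero.mp this).resolve_right ha00
    -- diagonal of T vanishes, so T = 0
    have hdiag : ∀ i : Fin N, T i i = 0 := by
      intro i
      rw [hToep i i ⟨0, hN⟩ ⟨0, hN⟩ (by simp), hcol ⟨0, hN⟩]
    have hTzero : T = 0 := by
      have hcols : ∀ j : Fin N, T *ᵥ Pi.single j 1 = 0 := by
        intro j
        apply (hPSD.dotProduct_mulVec_zero_iff _).mp
        rw [Matrix.mulVec_single]
        unfold dotProduct
        rw [Finset.sum_eq_single j]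
        · simp [hdiag j]
        · intro b _ hb
          simp [Pi.single_apply, hb]
        · intro hmem; exact absurd (Finset.mem_univ _) hmem
      ext i j
      have := congrFun (hcols j) i
      rw [Matrix.mulVec_single] at this
      simpa using this
    rw [hTzero] at hrank0
    exact hrank0 (Matrix.rank_zero)
  have hN2 : 2 ≤ N := by omega
  -- a root of pOf a
  obtain ⟨z0, hz0⟩ : ∃ z0 : ℂ, (pOf N a).IsRoot z0 := by
    apply Complex.exists_root
    rw [← Polynomial.natDegree_pos_iff_degree_pos]
    omega
  obtain ⟨g, hfac⟩ : ∃ g, pOf N a = (Polynomial.X - Polynomial.C z0) * g :=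
    Polynomial.dvd_iff_isRoot.mpr hz0
  have hgne : g ≠ 0 := by
    intro h; rw [h, mul_zero] at hfac; exact hpane hfac
  have hgdeg : g.natDegree = m - 1 := by
    have := Polynomial.natDegree_mul (Polynomial.X_sub_C_ne_zero z0) hgne
    rw [← hfac, hadeg', Polynomial.natDegree_X_sub_C] at this
    omega
  have hgdeg2 : g.natDegree ≤ N - 2 := by omega
  -- reflected polynomial
  set pt : Polynomial ℂ :=
    (1 - Polynomial.C ((starRingEnd ℂ) z0) * Polynomial.X) * g with hpt
  have hptdeg : pt.natDegree ≤ m := by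
    apply le_trans Polynomial.natDegree_mul_le
    have := natDegree_one_sub_CX_le ((starRingEnd ℂ) z0)
    omega
  set at' : Fin N → ℂ := fun i : Fin N => pt.coeff (i : ℕ) with hat
  have hrec : pOf N at' = pt := pOf_recover (by omega)
  have hprod : pOf N at' * qOf N at' = pOf N a * qOf N a := by
    rw [← reflect_pOf hN at', ← reflect_pOf hN a, hrec, hfac, hpt]
    exact (key_prod_swap hN2 z0 hgdeg2).symm
  have hatker : T *ᵥ at' = 0 := by
    apply (hPSD.dotProduct_mulVec_zero_iff at').mp
    rw [← Qf_eq_dot, Qf_congr hToep (rho_congr_of_prod hN hprod), Qf_eq_dot, haker]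
    simp
  -- at' is a scalar multiple of a
  have hscal : ∃ c : ℂ, at' = c • a := by
    set c : ℂ := pt.coeff m / (pOf N a).coeff m with hc
    refine ⟨c, ?_⟩
    have hlead : (pOf N a).coeff m ≠ 0 := by
      rw [← hadeg']
      exact Polynomial.leadingCoeff_ne_zero.mpr hpane
    set y : Fin N → ℂ := at' - c • a with hy
    have hyker : T *ᵥ y = 0 := by
      rw [hy, Matrix.mulVec_sub, Matrix.mulVec_smul, haker, hatker]
      simp
    have hpy : pOf N y = pt - Polynomial.C c * pOf N a := by
      rw [hy, pOf_sub, pOf_smul, hrec]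
    have hydeg : (pOf N y).natDegree ≤ m := by
      rw [hpy]
      apply le_trans (Polynomial.natDegree_sub_le _ _)
      simp only [max_le_iff]
      exact ⟨hptdeg, le_trans (Polynomial.natDegree_C_mul_le _ _) (le_of_eq hadeg')⟩
    have hycoeff : (pOf N y).coeff m = 0 := by
      rw [hpy, Polynomial.coeff_sub, Polynomial.coeff_C_mul, hc]
      field_simp
      ring
    have hy0 : y = 0 := by
      by_contra hyne
      have h1 := hmin y hyker hyne
      have h2 : (pOf N y).natDegree = m := le_antisymm hydeg h1
      have h3 : pOf N y ≠ 0 := fun h => hyne (pOf_eq_zero_iff.mp h)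
      apply h3
      rw [← Polynomial.leadingCoeff_eq_zero, Polynomial.leadingCoeff, h2]
      exact hycoeff
    rw [hy] at hy0
    funext i
    have := congrFun hy0 i
    simp only [Pi.sub_apply, Pi.zero_apply, sub_eq_zero] at this
    exact this
  obtain ⟨c, hcs⟩ := hscal
  -- z0 is unimodular
  have hz0mod : (starRingEnd ℂ) z0 * z0 = 1 := by
    have hpteq : pt = Polynomial.C c * pOf N a := by
      rw [← hrec, hcs, pOf_smul]
    rw [hfac, hpt, ← mul_assoc] at hpteq
    have hcancel := mul_right_cancel₀ hgne hpteq
    have hco0 := congrArg (fun p => Polynomial.coeff p 0) hcancel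
    have hco1 := congrArg (fun p => Polynomial.coeff p 1) hcancel
    simp only [Polynomial.coeff_sub, Polynomial.coeff_C_mul, Polynomial.coeff_one,
      Polynomial.coeff_X_zero, Polynomial.coeff_X_one, Polynomial.coeff_C,
      mul_zero, mul_one, sub_zero, zero_sub] at hco0 hco1
    norm_num at hco0 hco1
    linear_combination -z0 * hco1 - hco0
  -- powers of X times (pOf N a) stay in the kernel
  have hker_pow : ∀ j : ℕ, j + m ≤ N - 1 →
      T *ᵥ (fun i : Fin N => (Polynomial.X ^ j * pOf N a).coeff (i : ℕ)) = 0 := by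
    intro j
    induction j with
    | zero =>
      intro _
      have h1 : (fun i : Fin N => (Polynomial.X ^ 0 * pOf N a).coeff (i : ℕ)) = a := by
        funext i
        rw [pow_zero, one_mul, coeff_pOf, dif_pos i.isLt]
      rw [h1]; exact haker
    | succ j IH =>
      intro hj
      have hdegj : (Polynomial.X ^ j * pOf N a).natDegree ≤ N - 2 := by
        apply le_trans Polynomial.natDegree_mul_le
        rw [Polynomial.natDegree_X_pow]
        omega
      have hIH := IH (by omega)
      have hrecj : pOf N (fun i : Fin N => (Polynomial.X ^ j * pOf N a).coeff (i : ℕ))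
          = Polynomial.X ^ j * pOf N a := pOf_recover (by omega)
      have hsh := ker_shift hN2 hToep hPSD hIH (by rw [hrecj]; exact hdegj)
      rw [hrecj] at hsh
      have harr : Polynomial.X * (Polynomial.X ^ j * pOf N a)
          = Polynomial.X ^ (j + 1) * pOf N a := by rw [pow_succ]; ring
      rw [harr] at hsh
      exact hsh
  -- every kernel element is divisible by pOf N a
  have hdvd : ∀ x : Fin N → ℂ, T *ᵥ x = 0 → pOf N a ∣ pOf N x := by
    have H : ∀ n : ℕ, ∀ x : Fin N → ℂ, T *ᵥ x = 0 → (pOf N x).natDegree ≤ n →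
        pOf N a ∣ pOf N x := by
      intro n
      induction n using Nat.strong_induction_on with
      | _ n IH =>
        intro x hx hdeg
        by_cases hx0 : x = 0
        · rw [hx0, pOf_eq_zero_iff.mpr rfl]
          exact dvd_zero _
        · set k := (pOf N x).natDegree with hk
          have hkm : m ≤ k := hmin x hx hx0
          have hkN : k ≤ N - 1 := natDegree_pOf_le hN x
          set j := k - m with hj
          have hjm : j + m ≤ N - 1 := by omega
          set s : Fin N → ℂ := fun i : Fin N => (Polynomial.X ^ j * pOf N a).coeff (i : ℕ)
            with hs
          have hsker := hker_pow j hjm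
          have hsdeg : (Polynomial.X ^ j * pOf N a).natDegree ≤ N - 1 := by
            apply le_trans Polynomial.natDegree_mul_le
            rw [Polynomial.natDegree_X_pow]; omega
          have hsrec : pOf N s = Polynomial.X ^ j * pOf N a := pOf_recover (by omega)
          set c := (pOf N x).coeff k / (pOf N a).coeff m with hc
          have hlead : (pOf N a).coeff m ≠ 0 := by
            rw [← hadeg']; exact Polynomial.leadingCoeff_ne_zero.mpr hpane
          set y : Fin N → ℂ := x - c • s with hy
          have hyker : T *ᵥ y = 0 := by
            rw [hy, Matrix.mulVec_sub, Matrix.mulVec_smul, hx, hsker]; simp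
          have hpy : pOf N y = pOf N x - Polynomial.C c * (Polynomial.X ^ j * pOf N a) := by
            rw [hy, pOf_sub, pOf_smul, hsrec]
          have hycoeff : (pOf N y).coeff k = 0 := by
            rw [hpy, Polynomial.coeff_sub, Polynomial.coeff_C_mul]
            have hXk : (Polynomial.X ^ j * pOf N a).coeff k = (pOf N a).coeff m := by
              have hkmj : k = m + j := by omega
              rw [hkmj, Polynomial.coeff_X_pow_mul]
            rw [hXk, hc]
            field_simp
            ring
          have hydeg : (pOf N y).natDegree ≤ k := by
            rw [hpy]
            apply le_trans (Polynomial.natDegree_sub_le _ _)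
            simp only [max_le_iff]
            refine ⟨le_rfl, ?_⟩
            apply le_trans (Polynomial.natDegree_C_mul_le _ _)
            apply le_trans Polynomial.natDegree_mul_le
            rw [Polynomial.natDegree_X_pow, hadeg']
            omega
          have hdvd_y : pOf N a ∣ pOf N y := by
            by_cases hy0 : y = 0
            · rw [hy0, pOf_eq_zero_iff.mpr rfl]
              exact dvd_zero _
            · have hyne : pOf N y ≠ 0 := fun h => hy0 (pOf_eq_zero_iff.mp h)
              have hky : (pOf N y).natDegree < k := by
                rcases lt_or_eq_of_le hydeg with h | h
                · exact h
                · exfalso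
                  apply hyne
                  rw [← Polynomial.leadingCoeff_eq_zero, Polynomial.leadingCoeff, h]
                  exact hycoeff
              exact IH (pOf N y).natDegree (lt_of_lt_of_le hky hdeg) y hyker le_rfl
          have hxeq : pOf N x = pOf N y + Polynomial.C c * (Polynomial.X ^ j * pOf N a) := by
            rw [hpy]; ring
          rw [hxeq]
          exact dvd_add hdvd_y (Dvd.dvd.mul_left (Dvd.dvd.mul_left dvd_rfl _) _)
    intro x hx
    exact H (pOf N x).natDegree x hx le_rfl
  -- conclude
  refine ⟨(starRingEnd ℂ) z0, ?_, ?_⟩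
  · have hnsq : Complex.normSq z0 = 1 := by
      have h1 : ((Complex.normSq z0 : ℝ) : ℂ) = ((1 : ℝ) : ℂ) := by
        rw [Complex.normSq_eq_conj_mul_self, hz0mod, Complex.ofReal_one]
      exact_mod_cast h1
    rw [Complex.norm_conj, Complex.norm_def, hnsq, Real.sqrt_one]
  · apply mem_range_of_perp_ker hPSD.1
    intro x hx
    obtain ⟨h, hh⟩ := hdvd x hx
    have heval : (pOf N x).eval z0 = 0 := by
      have ha0 : (pOf N a).eval z0 = 0 := hz0
      rw [hh, Polynomial.eval_mul, ha0, zero_mul]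
    have hdot : star x ⬝ᵥ vN N ((starRingEnd ℂ) z0)
        = (starRingEnd ℂ) ((pOf N x).eval z0) := by
      rw [pOf_eval, map_sum]
      unfold dotProduct vN
      apply Finset.sum_congr rfl
      intro i _
      rw [RingHom.map_mul, RingHom.map_pow]
      rfl
    rw [hdot, heval, map_zero]

lemma vecMulVec_mulVec {N : ℕ} (a b x : Fin N → ℂ) :
    Matrix.vecMulVec a b *ᵥ x = (b ⬝ᵥ x) • a := by
  funext i
  unfold Matrix.mulVec dotProduct Matrix.vecMulVec
  simp only [Matrix.of_apply, Pi.smul_apply, smul_eq_mul]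
  rw [Finset.sum_congr rfl (fun j _ => mul_assoc (a i) (b j) (x j) : _), ← Finset.mul_sum]
  ring

lemma atom_herm {N : ℕ} (v : Fin N → ℂ) :
    (Matrix.vecMulVec v (star v)).IsHermitian := by
  unfold Matrix.IsHermitian
  ext i j
  simp only [Matrix.conjTranspose_apply, Matrix.vecMulVec_apply, Pi.star_apply]
  rw [star_mul', star_star]
  ring

lemma isToep_sub {N : ℕ} {T S : Matrix (Fin N) (Fin N) ℂ} (hT : IsToep N T)
    (hS : IsToep N S) : IsToep N (T - S) := by
  intro i j i' j' h
  simp only [Matrix.sub_apply, hT i j i' j' h, hS i j i' j' h]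

lemma isToep_atom {N : ℕ} {z : ℂ} (hz : ‖z‖ = 1) :
    IsToep N (Matrix.vecMulVec (vN N z) (star (vN N z))) := by
  have hzz : z * (starRingEnd ℂ) z = 1 := by
    rw [Complex.mul_conj]
    norm_cast
    rw [← Complex.sq_norm, hz]
    norm_num
  intro i j i' j' h
  simp only [Matrix.vecMulVec_apply, Pi.star_apply, vN, star_pow, Complex.star_def]
  set w := (starRingEnd ℂ) z with hwdef
  have key : ∀ p q r s : ℕ, p + q = r + s →
      z ^ p * w ^ s = z ^ r * w ^ q := by
    intro p q r s hpq
    have h1 : z ^ p * w ^ s * (z * w) ^ q = z ^ (p + q) * w ^ (s + q) := by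
      rw [mul_pow, pow_add, pow_add]; ring
    have h2 : z ^ r * w ^ q * (z * w) ^ s = z ^ (r + s) * w ^ (q + s) := by
      rw [mul_pow, pow_add, pow_add]; ring
    have h3 : z ^ (p + q) * w ^ (s + q) = z ^ (r + s) * w ^ (q + s) := by
      rw [hpq, add_comm s q]
    rw [hzz, one_pow, mul_one] at h1 h2
    rw [h1, h3, ← h2]
  exact key (i : ℕ) (j' : ℕ) (i' : ℕ) (j : ℕ) h

lemma isToep_smul {N : ℕ} (c : ℝ) {T : Matrix (Fin N) (Fin N) ℂ} (hT : IsToep N T) :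
    IsToep N (c • T) := by
  intro i j i' j' h
  simp only [Matrix.smul_apply, hT i j i' j' h]

lemma main_ind {N : ℕ} (hN : 0 < N) : ∀ K : ℕ, ∀ T : Matrix (Fin N) (Fin N) ℂ,
    IsToep N T → T.PosSemidef → T.rank = K →
    ∃ (z : Fin K → ℂ) (d : Fin K → ℝ),
      Function.Injective z ∧ (∀ k, ‖z k‖ = 1) ∧ (∀ k, 0 < d k) ∧
      (∀ k, vN N (z k) ∈ LinearMap.range T.mulVecLin) ∧
      T = ∑ k, (d k) • Matrix.vecMulVec (vN N (z k)) (star (vN N (z k))) := by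
  intro K
  induction K with
  | zero =>
    intro T hToep hPSD hrank
    refine ⟨Fin.elim0, Fin.elim0, fun k => k.elim0, fun k => k.elim0, fun k => k.elim0,
      fun k => k.elim0, ?_⟩
    have hbot : LinearMap.range T.mulVecLin = ⊥ := Submodule.finrank_eq_zero.mp hrank
    have hT0 : T = 0 := by
      ext i j
      have hm : T *ᵥ Pi.single j 1 ∈ LinearMap.range T.mulVecLin := ⟨Pi.single j 1, rfl⟩
      rw [hbot, Submodule.mem_bot] at hm
      have := congrFun hm i
      rw [Matrix.mulVec_single] at this
      simpa using this
    rw [hT0]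
    simp
  | succ K IH =>
    intro T hToep hPSD hrank
    have hrank_le : T.rank ≤ N := le_trans (Matrix.rank_le_card_width T) (by simp)
    have hzex : ∃ z : ℂ, ‖z‖ = 1 ∧ vN N z ∈ LinearMap.range T.mulVecLin := by
      rcases lt_or_eq_of_le hrank_le with hlt | heq
      · exact exists_unimodular_in_range hN hToep hPSD (by omega) hlt
      · refine ⟨1, by simp, ?_⟩
        have htop : LinearMap.range T.mulVecLin = ⊤ := by
          apply Submodule.eq_top_of_finrank_eq
          rw [show Module.finrank ℂ (Fin N → ℂ) = N by simp]
          exact heq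
        rw [htop]
        trivial
    obtain ⟨z0, hz0abs, v_mem⟩ := hzex
    set v : Fin N → ℂ := vN N z0 with hv
    obtain ⟨w, hw⟩ := v_mem
    have hw' : T *ᵥ w = v := hw
    have hvne : v ≠ 0 := by
      intro h
      have h0 := congrFun h ⟨0, hN⟩
      simp only [hv, vN, Pi.zero_apply] at h0
      rw [pow_zero] at h0
      exact one_ne_zero h0
    set cC : ℂ := star w ⬝ᵥ T *ᵥ w with hcC
    have hc_nonneg : (0 : ℂ) ≤ cC := hPSD.dotProduct_mulVec_nonneg w
    have hc_ne : cC ≠ 0 := by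
      intro h
      exact hvne (by rw [← hw']; exact (hPSD.dotProduct_mulVec_zero_iff w).mp h)
    obtain ⟨hcre, hcim⟩ := Complex.nonneg_iff.mp hc_nonneg
    set cR : ℝ := cC.re with hcR
    have hcC_eq : (cR : ℂ) = cC := by
      apply Complex.ext
      · simp [hcR]
      · simp [hcR, ← hcim]
    have hcR_pos : 0 < cR := by
      rcases lt_or_eq_of_le hcre with h | h
      · exact h
      · exfalso
        apply hc_ne
        apply Complex.ext
        · simp only [Complex.zero_re]
          rw [← hcR, ← h]
        · simp only [Complex.zero_im]
          rw [← hcim]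
    set d0 : ℝ := 1 / cR with hd0
    have hd0C : ((d0 : ℝ) : ℂ) = 1 / cC := by
      rw [hd0, ← hcC_eq]
      push_cast
      rfl
    set A : Matrix (Fin N) (Fin N) ℂ := Matrix.vecMulVec v (star v) with hA
    have hAsmul : d0 • A = ((d0 : ℝ) : ℂ) • A := by
      ext i j
      simp [Complex.real_smul]
    set T' : Matrix (Fin N) (Fin N) ℂ := T - d0 • A with hT'
    have hconjc : (starRingEnd ℂ) cC = cC := by
      rw [← hcC_eq, Complex.conj_ofReal]
    -- star v ⬝ᵥ x = star w ⬝ᵥ T *ᵥ x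
    have hsv : ∀ x : Fin N → ℂ, star v ⬝ᵥ x = star w ⬝ᵥ T *ᵥ x := by
      intro x
      rw [← hw', star_mulVec, hPSD.1.eq, ← dotProduct_mulVec]
    -- star x ⬝ᵥ v = conj (star w ⬝ᵥ T *ᵥ x)
    have hxv : ∀ x : Fin N → ℂ, star x ⬝ᵥ v = (starRingEnd ℂ) (star w ⬝ᵥ T *ᵥ x) := by
      intro x
      rw [← hw']
      exact herm_dot hPSD.1 x w
    -- mulVec formula for T'
    have hT'mul : ∀ x : Fin N → ℂ, T' *ᵥ x
        = T *ᵥ x - (((d0 : ℝ) : ℂ) * (star v ⬝ᵥ x)) • v := by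
      intro x
      rw [hT', Matrix.sub_mulVec, hAsmul, Matrix.smul_mulVec, hA,
        vecMulVec_mulVec, smul_smul]
    -- quadratic form of T'
    have hform : ∀ x : Fin N → ℂ, star x ⬝ᵥ T' *ᵥ x
        = star x ⬝ᵥ T *ᵥ x
          - (1 / cC) * ((star w ⬝ᵥ T *ᵥ x) * (starRingEnd ℂ) (star w ⬝ᵥ T *ᵥ x)) := by
      intro x
      rw [hT'mul, dotProduct_sub, dotProduct_smul, hsv, hxv, hd0C, smul_eq_mul]
      ring
    -- positivity of the form of T'
    have hform_nonneg : ∀ x : Fin N → ℂ, (0 : ℂ) ≤ star x ⬝ᵥ T' *ᵥ x := by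
      intro x
      set s : ℂ := star w ⬝ᵥ T *ᵥ x with hs
      set y : Fin N → ℂ := x - (s / cC) • w with hy
      have hPSDy := hPSD.dotProduct_mulVec_nonneg y
      have hexp : star y ⬝ᵥ T *ᵥ y = star x ⬝ᵥ T' *ᵥ x := by
        rw [hform x, ← hs]
        rw [hy, Matrix.mulVec_sub, Matrix.mulVec_smul, hw']
        rw [star_sub, star_smul]
        simp only [sub_dotProduct, dotProduct_sub, smul_dotProduct, dotProduct_smul]
        have h1 : star x ⬝ᵥ T *ᵥ x = star x ⬝ᵥ T *ᵥ x := rfl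
        have h2 : star x ⬝ᵥ v = (starRingEnd ℂ) s := by rw [hxv, hs]
        have h3 : star w ⬝ᵥ T *ᵥ x = s := hs.symm
        have h4 : star w ⬝ᵥ v = cC := by rw [← hw', hcC]
        rw [h2, h3, h4]
        have hstar : star (s / cC) = (starRingEnd ℂ) s / cC := by
          rw [star_div₀]
          have : star cC = cC := hconjc
          rw [this]
          rfl
        rw [hstar]
        simp only [smul_eq_mul]
        field_simp
        ring
      rw [← hexp]
      exact hPSDy
    -- T' is Hermitian
    have hT'herm : T'.IsHermitian := by
      rw [hT', hAsmul]
      apply Matrix.IsHermitian.sub hPSD.1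
      rw [Matrix.IsHermitian, Matrix.conjTranspose_smul]
      rw [Complex.star_def, Complex.conj_ofReal, (atom_herm v).eq]
    have hT'PSD : T'.PosSemidef := .of_dotProduct_mulVec_nonneg hT'herm hform_nonneg
    -- T' is Toeplitz
    have hT'toep : IsToep N T' := isToep_sub hToep (isToep_smul d0 (isToep_atom hz0abs))
    -- w is in the kernel of T'
    have hT'w : T' *ᵥ w = 0 := by
      rw [hT'mul, hsv, ← hcC, hw', hd0C]
      rw [div_mul_cancel₀ 1 hc_ne, one_smul]
      simp
    -- kernel of T is contained in kernel of T'
    have hkerle : LinearMap.ker T.mulVecLin ≤ LinearMap.ker T'.mulVecLin := by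
      intro x hx
      have hx' : T *ᵥ x = 0 := hx
      rw [LinearMap.mem_ker]
      show T' *ᵥ x = 0
      rw [hT'mul, hsv, hx']
      simp
    -- w not in kernel of T
    have hwnk : w ∉ LinearMap.ker T.mulVecLin := by
      intro hmem
      have : T *ᵥ w = 0 := hmem
      rw [hw'] at this
      exact hvne this
    -- rank of T' equals K
    have hrank' : T'.rank = K := by
      have hlt : LinearMap.ker T.mulVecLin < LinearMap.ker T'.mulVecLin := by
        apply lt_of_le_of_ne hkerle
        intro heq
        apply hwnk
        rw [heq]
        exact hT'w
      have hfin := Submodule.finrank_lt_finrank_of_lt hlt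
      have hrn1 := LinearMap.finrank_range_add_finrank_ker T.mulVecLin
      have hrn2 := LinearMap.finrank_range_add_finrank_ker T'.mulVecLin
      have hfr : Module.finrank ℂ (Fin N → ℂ) = N := by simp
      -- upper bound
      have hub : T'.rank ≤ K := by
        unfold Matrix.rank at hrank ⊢
        omega
      -- lower bound: range T ≤ range T' ⊔ span {v}
      have hle : LinearMap.range T.mulVecLin
          ≤ LinearMap.range T'.mulVecLin ⊔ (ℂ ∙ v) := by
        rintro _ ⟨x, rfl⟩
        have hdecomp : T.mulVecLin x
            = T' *ᵥ x + (((d0 : ℝ) : ℂ) * (star v ⬝ᵥ x)) • v := by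
          show T *ᵥ x = _
          rw [hT'mul]
          abel
        rw [hdecomp]
        apply Submodule.add_mem
        · exact Submodule.mem_sup_left ⟨x, rfl⟩
        · exact Submodule.mem_sup_right (Submodule.smul_mem _ _
            (Submodule.mem_span_singleton_self v))
      have hspan : Module.finrank ℂ (ℂ ∙ v : Submodule ℂ (Fin N → ℂ)) = 1 :=
        finrank_span_singleton hvne
      have hsup := Submodule.finrank_sup_add_finrank_inf_eq
        (LinearMap.range T'.mulVecLin) (ℂ ∙ v)
      have hmono := Submodule.finrank_mono hle
      have hlb : T.rank ≤ T'.rank + 1 := by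
        unfold Matrix.rank
        omega
      omega
    -- v is not in the range of T'
    have hvnr : v ∉ LinearMap.range T'.mulVecLin := by
      rintro ⟨y, hy⟩
      have hy' : T' *ᵥ y = v := hy
      apply hc_ne
      have h1 : star w ⬝ᵥ v = cC := by rw [← hw', hcC]
      rw [← h1, ← hy', herm_dot hT'herm w y, hT'w]
      simp
    -- range of T' is contained in range of T
    have hrle : LinearMap.range T'.mulVecLin ≤ LinearMap.range T.mulVecLin := by
      rintro _ ⟨x, rfl⟩
      refine ⟨x - (((d0 : ℝ) : ℂ) * (star v ⬝ᵥ x)) • w, ?_⟩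
      show T *ᵥ _ = T' *ᵥ x
      rw [Matrix.mulVec_sub, Matrix.mulVec_smul, hw', hT'mul]
    -- apply induction hypothesis
    obtain ⟨z', d', hinj', habs', hpos', hmem', hsum'⟩ := IH T' hT'toep hT'PSD hrank'
    refine ⟨Fin.cons z0 z', Fin.cons d0 d', ?_, ?_, ?_, ?_, ?_⟩
    · rw [Fin.cons_injective_iff]
      constructor
      · intro hmem
        obtain ⟨k, hk⟩ := Set.mem_range.mp hmem
        apply hvnr
        have : vN N (z' k) = v := by rw [hk, hv]
        rw [← this]
        exact hmem' k
      · exact hinj'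
    · intro k
      refine Fin.cases ?_ ?_ k
      · rw [Fin.cons_zero]; exact hz0abs
      · intro i; rw [Fin.cons_succ]; exact habs' i
    · intro k
      refine Fin.cases ?_ ?_ k
      · rw [Fin.cons_zero]; exact one_div_pos.mpr hcR_pos
      · intro i; rw [Fin.cons_succ]; exact hpos' i
    · intro k
      refine Fin.cases ?_ ?_ k
      · rw [Fin.cons_zero]; exact ⟨w, hw⟩
      · intro i; rw [Fin.cons_succ]; exact hrle (hmem' i)
    · rw [Fin.sum_univ_succ]
      simp only [Fin.cons_zero, Fin.cons_succ]
      rw [← hsum']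
      rw [hT', ← hv, ← hA]
      abel

end VandAux

/-- Vandermonde decomposition of a PSD Hermitian Toeplitz matrix of rank `K`:
`T = ∑_{k=1}^K d_k · v_N(z_k) · v_N(z_k)ᴴ` with distinct unimodular `z_k` and `d_k > 0`. -/
theorem stmt7 (N : ℕ) (hN : 0 < N) (u : Fin N → ℂ)
    (T : Matrix (Fin N) (Fin N) ℂ) (hT : T = ToepMat N u)
    (hPSD : T.PosSemidef) (K : ℕ) (hK : K = T.rank) :
    ∃ (z : Fin K → ℂ) (d : Fin K → ℝ),
      Function.Injective z ∧ (∀ k, ‖z k‖ = 1) ∧ (∀ k, 0 < d k) ∧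
      T = ∑ k, (d k) • Matrix.vecMulVec (vN N (z k)) (star (vN N (z k))) := by
  have hToep : VandAux.IsToep N T := by
    rw [hT]
    exact VandAux.isToep_toepMat N u
  obtain ⟨z, d, hinj, habs, hpos, _, hsum⟩ :=
    VandAux.main_ind hN K T hToep hPSD hK.symm
  exact ⟨z, d, hinj, habs, hpos, hsum⟩
end
end

section
/- (Weak duality between the fast dual SDP and the fast primal SDP.) Let N_M, N_l, N_F be positive integers, M = {p_1 < … < p_{N_m}} ⊆ {0,…,N_M−1}, F ⊆ {1,…,N_F} with |F| = N_f, U = {p·f : p ∈ M, f ∈ F} with elements U_1 < … < U_{N_u}, and N = N_F(N_M−1)+1. Suppose: (a) Q ∈ ℂ^{N_m×N_l×N_f} has frequency slices Q_f (f ∈ F), P ∈ ℂ^{N_u×N_u} is Hermitian, the block matrix [[P, Q̃_r],[Q̃_r^H, I_{N_l N_f}]] is positive semidefinite where Q̃_r = [R₁(Q_f)]_{f∈F} ∈ ℂ^{N_u×N_l N_f}, and ∑_{(i,j): U_j−U_i = k} P(i,j) = δ_{k,0} for all k = 0,…,N−1; (b) u ∈ ℂ^N, W ∈ ℂ^{N_l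 N_f×N_l N_f} Hermitian, Ỹ ∈ ℂ^{N_u×N_l N_f}, the block matrix [[T(u), Ỹ],[Ỹ^H, W]] is positive semidefinite, and Y ∈ ℂ^{N_m×N_l×N_f} satisfies Y_f = R₁*(Ỹ_f) for all f ∈ F, where Ỹ_f ∈ ℂ^{N_u×N_l} is the block of N_l columns of Ỹ associated with frequency f and R₁* is the adjoint of R₁. Then Re⟨Q, Y⟩ ≤ Tr(T(u)) + Tr(W). -/
open Matrix BigOperators
open scoped ComplexOrder

noncomputable section

/-- The map `R₁ : ℂ^{N_m×N_l} → ℂ^{N_u×N_l}` for frequency value `fval`: row `i` of the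
input is placed in the row `r` with `U_r = fval·p_i`; all other rows are zero. -/
def R1 (N_m N_l N_u N : ℕ) (p : Fin N_m → ℕ) (U : Fin N_u → Fin N) (fval : ℕ)
    (Q : Matrix (Fin N_m) (Fin N_l) ℂ) : Matrix (Fin N_u) (Fin N_l) ℂ :=
  fun r l => ∑ i : Fin N_m, if ((U r) : ℕ) = fval * p i then Q i l else 0

/-- The adjoint `R₁* : ℂ^{N_u×N_l} → ℂ^{N_m×N_l}` of `R₁` (w.r.t. the real entrywise
inner product): row `i` of the output is the row `r` of the input with `U_r = fval·p_i`. -/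
def R1star (N_m N_l N_u N : ℕ) (p : Fin N_m → ℕ) (U : Fin N_u → Fin N) (fval : ℕ)
    (Yt : Matrix (Fin N_u) (Fin N_l) ℂ) : Matrix (Fin N_m) (Fin N_l) ℂ :=
  fun i l => ∑ r : Fin N_u, if ((U r) : ℕ) = fval * p i then Yt r l else 0

/-- The lifted matrix `Q̃_r = [R₁(Q_f)]_{f ∈ F} ∈ ℂ^{N_u × N_l N_f}`. -/
def QtildeR (N_m N_l N_f N_u N : ℕ) (p : Fin N_m → ℕ) (U : Fin N_u → Fin N)
    (fr : Fin N_f → ℕ) (Q : Fin N_m → Fin N_l → Fin N_f → ℂ) :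
    Matrix (Fin N_u) (Fin N_f × Fin N_l) ℂ :=
  fun r q => R1 N_m N_l N_u N p U (fr q.1) (fun i l => Q i l q.1) r q.2

/-- Real inner product of tensors, `⟨Q,Y⟩_ℝ = Re ∑ conj(Q)·Y`. -/
def reInner {α β γ : Type*} [Fintype α] [Fintype β] [Fintype γ]
    (Q Y : α → β → γ → ℂ) : ℝ :=
  (∑ m, ∑ l, ∑ f, (starRingEnd ℂ) (Q m l f) * Y m l f).re

lemma psd_diag_re_nonneg {n : Type*} [Fintype n] [DecidableEq n] {M : Matrix n n ℂ}
    (hM : M.PosSemidef) (i : n) : 0 ≤ (M i i).re := by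
  simpa [dotProduct, Matrix.mulVec, Pi.single_apply, Finset.sum_ite_eq] using
    hM.re_dotProduct_nonneg (Pi.single i 1)

lemma psd_trace_re_nonneg {n : Type*} [Fintype n] [DecidableEq n] {M : Matrix n n ℂ}
    (hM : M.PosSemidef) : 0 ≤ M.trace.re := by
  rw [Matrix.trace, Complex.re_sum]
  exact Finset.sum_nonneg fun i _ => psd_diag_re_nonneg hM i

lemma trace_mul_psd_re_nonneg {n : Type*} [Fintype n] [DecidableEq n]
    {A B : Matrix n n ℂ} (hA : A.PosSemidef) (hB : B.PosSemidef) :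
    0 ≤ (A * B).trace.re := by
  obtain ⟨C, rfl⟩ : ∃ C : Matrix n n ℂ, B = Cᴴ * C := by
    open scoped MatrixOrder in
    obtain ⟨C, hC⟩ := CStarAlgebra.nonneg_iff_eq_star_mul_self.mp hB.nonneg
    exact ⟨C, hC⟩
  rw [← Matrix.mul_assoc, Matrix.trace_mul_comm]
  have : C * (A * Cᴴ) = C * A * Cᴴ := by rw [Matrix.mul_assoc]
  rw [this]
  exact psd_trace_re_nonneg (hA.mul_mul_conjTranspose_same C)

lemma trace_fromBlocks' {n m : Type*} [Fintype n] [Fintype m]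
    (A : Matrix n n ℂ) (B : Matrix n m ℂ) (C : Matrix m n ℂ) (D : Matrix m m ℂ) :
    (Matrix.fromBlocks A B C D).trace = A.trace + D.trace := by
  simp [Matrix.trace, Matrix.diag, Fintype.sum_sum_type, Matrix.fromBlocks]

/-- Weak duality between the fast dual SDP and the fast primal SDP:
any feasible point `(Q,P)` for the dual and `(u,W,Ỹ)` for the primal satisfy
`Re⟨Q,Y⟩ ≤ Tr(T(u)) + Tr(W)`. -/
theorem stmt8 (N_M N_l N_F : ℕ) (hM : 0 < N_M) (hl : 0 < N_l) (hF : 0 < N_F)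
    (N : ℕ) (hN : N = N_F * (N_M - 1) + 1)
    -- sensor positions M = {p_1 < … < p_{N_m}} ⊆ {0,…,N_M-1}
    (N_m : ℕ) (p : Fin N_m → ℕ) (hp : StrictMono p) (hpb : ∀ i, p i ≤ N_M - 1)
    -- frequencies F ⊆ {1,…,N_F}, |F| = N_f
    (N_f : ℕ) (fr : Fin N_f → ℕ) (hfr : StrictMono fr)
    (hfrb : ∀ f, 1 ≤ fr f ∧ fr f ≤ N_F)
    -- U = {p·f : p ∈ M, f ∈ F} with elements U_1 < … < U_{N_u}
    (N_u : ℕ) (U : Fin N_u → Fin N) (hU : StrictMono U)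
    (hUset : ∀ n : Fin N, (∃ r, U r = n) ↔ ∃ i f, p i * fr f = (n : ℕ))
    -- (a) feasible point of the fast dual SDP
    (Q : Fin N_m → Fin N_l → Fin N_f → ℂ)
    (P : Matrix (Fin N_u) (Fin N_u) ℂ) (hPH : P.IsHermitian)
    (hPSD1 : (Matrix.fromBlocks P (QtildeR N_m N_l N_f N_u N p U fr Q)
        (QtildeR N_m N_l N_f N_u N p U fr Q)ᴴ
        (1 : Matrix (Fin N_f × Fin N_l) (Fin N_f × Fin N_l) ℂ)).PosSemidef)
    (htr : ∀ k : ℕ, k < N →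
      (∑ i : Fin N_u, ∑ j : Fin N_u, if ((U j) : ℕ) = ((U i) : ℕ) + k then P i j else 0)
        = if k = 0 then 1 else 0)
    -- (b) feasible point of the fast primal SDP
    (u : Fin N → ℂ)
    (W : Matrix (Fin N_f × Fin N_l) (Fin N_f × Fin N_l) ℂ) (hWH : W.IsHermitian)
    (Yt : Matrix (Fin N_u) (Fin N_f × Fin N_l) ℂ)
    (hPSD2 : (Matrix.fromBlocks (Tirr N N_u U u) Yt Ytᴴ W).PosSemidef)
    (Y : Fin N_m → Fin N_l → Fin N_f → ℂ)
    (hY : ∀ (f : Fin N_f) (i : Fin N_m) (l : Fin N_l),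
      Y i l f = R1star N_m N_l N_u N p U (fr f) (fun r l' => Yt r (f, l')) i l) :
    reInner Q Y ≤ (Tirr N N_u U u).trace.re + W.trace.re := by
  have hNpos : 0 < N := by omega
  set Qt := QtildeR N_m N_l N_f N_u N p U fr Q with hQt
  set T := Tirr N N_u U u with hT
  -- N_u > 0
  have hNu : 0 < N_u := by
    by_contra h
    push_neg at h
    interval_cases N_u
    have := htr 0 hNpos
    simp at this
  -- PSD of the sign-flipped dual block matrix
  have hA2 : (Matrix.fromBlocks P (-Qt) (-Qt)ᴴ
      (1 : Matrix (Fin N_f × Fin N_l) (Fin N_f × Fin N_l) ℂ)).PosSemidef := by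
    have key := hPSD1.mul_mul_conjTranspose_same
      (Matrix.fromBlocks (1 : Matrix (Fin N_u) (Fin N_u) ℂ) 0 0
        (-1 : Matrix (Fin N_f × Fin N_l) (Fin N_f × Fin N_l) ℂ))
    have heq : (Matrix.fromBlocks (1 : Matrix (Fin N_u) (Fin N_u) ℂ) 0 0
        (-1 : Matrix (Fin N_f × Fin N_l) (Fin N_f × Fin N_l) ℂ)) *
        (Matrix.fromBlocks P Qt Qtᴴ 1) *
        (Matrix.fromBlocks (1 : Matrix (Fin N_u) (Fin N_u) ℂ) 0 0
        (-1 : Matrix (Fin N_f × Fin N_l) (Fin N_f × Fin N_l) ℂ))ᴴ =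
        Matrix.fromBlocks P (-Qt) (-Qt)ᴴ 1 := by
      simp [Matrix.fromBlocks_multiply, Matrix.fromBlocks_conjTranspose,
        Matrix.conjTranspose_neg, Matrix.neg_mul, Matrix.mul_neg]
    rw [heq] at key
    exact key
  -- the key trace inequality
  have key : 0 ≤ ((Matrix.fromBlocks P (-Qt) (-Qt)ᴴ
      (1 : Matrix (Fin N_f × Fin N_l) (Fin N_f × Fin N_l) ℂ)) *
      (Matrix.fromBlocks T Yt Ytᴴ W)).trace.re :=
    trace_mul_psd_re_nonneg hA2 hPSD2
  have hexpand : ((Matrix.fromBlocks P (-Qt) (-Qt)ᴴ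
      (1 : Matrix (Fin N_f × Fin N_l) (Fin N_f × Fin N_l) ℂ)) *
      (Matrix.fromBlocks T Yt Ytᴴ W)).trace
      = (P * T).trace - (Qt * Ytᴴ).trace - (Qtᴴ * Yt).trace + W.trace := by
    rw [Matrix.fromBlocks_multiply, trace_fromBlocks' _ _ _ _]
    simp [Matrix.conjTranspose_neg, Matrix.neg_mul, Matrix.trace_add, Matrix.trace_neg]
    ring
  -- conjugate-pair traces have equal real part
  have hconj : (Qt * Ytᴴ).trace.re = (Qtᴴ * Yt).trace.re := by
    have : (Qt * Ytᴴ).trace = star ((Qtᴴ * Yt).trace) := by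
      rw [← Matrix.trace_conjTranspose, Matrix.conjTranspose_mul,
        Matrix.conjTranspose_conjTranspose, Matrix.trace_mul_comm]
    rw [this, Complex.star_def, Complex.conj_re]
  -- reInner equals the lifted trace
  have hinner : reInner Q Y = (Qtᴴ * Yt).trace.re := by
    rw [reInner]
    congr 1
    calc ∑ m, ∑ l, ∑ f, (starRingEnd ℂ) (Q m l f) * Y m l f
        = ∑ m, ∑ l, ∑ f, ∑ r, (if ((U r) : ℕ) = fr f * p m then
            (starRingEnd ℂ) (Q m l f) * Yt r (f, l) else 0) := by
          refine Finset.sum_congr rfl fun m _ => Finset.sum_congr rfl fun l _ =>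
            Finset.sum_congr rfl fun f _ => ?_
          rw [hY f m l]; unfold R1star; rw [Finset.mul_sum]
          exact Finset.sum_congr rfl fun r _ => by rw [mul_ite, mul_zero]
      _ = ∑ m, ∑ f, ∑ l, ∑ r, (if ((U r) : ℕ) = fr f * p m then
            (starRingEnd ℂ) (Q m l f) * Yt r (f, l) else 0) :=
          Finset.sum_congr rfl fun m _ => Finset.sum_comm
      _ = ∑ f, ∑ m, ∑ l, ∑ r, (if ((U r) : ℕ) = fr f * p m then
            (starRingEnd ℂ) (Q m l f) * Yt r (f, l) else 0) := Finset.sum_comm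
      _ = ∑ f, ∑ l, ∑ m, ∑ r, (if ((U r) : ℕ) = fr f * p m then
            (starRingEnd ℂ) (Q m l f) * Yt r (f, l) else 0) :=
          Finset.sum_congr rfl fun f _ => Finset.sum_comm
      _ = ∑ f, ∑ l, ∑ r, ∑ m, (if ((U r) : ℕ) = fr f * p m then
            (starRingEnd ℂ) (Q m l f) * Yt r (f, l) else 0) :=
          Finset.sum_congr rfl fun f _ => Finset.sum_congr rfl fun l _ => Finset.sum_comm
      _ = (Qtᴴ * Yt).trace := by
          rw [Matrix.trace]
          rw [Fintype.sum_prod_type]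
          refine Finset.sum_congr rfl fun f _ => Finset.sum_congr rfl fun l _ => ?_
          rw [Matrix.diag_apply, Matrix.mul_apply]
          refine Finset.sum_congr rfl fun r _ => ?_
          rw [Matrix.conjTranspose_apply]
          simp only [Complex.star_def, hQt, QtildeR, R1, map_sum, apply_ite (starRingEnd ℂ), map_zero,
            Finset.sum_mul, ite_mul, zero_mul]
  -- trace of P * T equals u₀
  have htrPT : (P * T).trace = u ⟨0, hNpos⟩ := by
    classical
    set v : ℕ → ℂ := fun k => if h : k < N then u ⟨k, h⟩ else 0 with hv
    have hTsum : ∀ i j : Fin N_u, T j i = ∑ k ∈ Finset.range N,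
        ((if ((U i) : ℕ) = ((U j) : ℕ) + k then v k else 0)
          + (if (((U j) : ℕ) = ((U i) : ℕ) + k ∧ k ≠ 0) then (starRingEnd ℂ) (v k) else 0)) := by
      intro i j
      rw [Finset.sum_add_distrib]
      have hUiN : ((U i) : ℕ) < N := (U i).isLt
      have hUjN : ((U j) : ℕ) < N := (U j).isLt
      have h1 : (∑ k ∈ Finset.range N, if ((U i) : ℕ) = ((U j) : ℕ) + k then v k else 0)
          = if ((U j) : ℕ) ≤ ((U i) : ℕ) then v (((U i) : ℕ) - ((U j) : ℕ)) else 0 := by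
        by_cases hba : ((U j) : ℕ) ≤ ((U i) : ℕ)
        · rw [if_pos hba]
          rw [Finset.sum_congr rfl (fun k _ => if_congr
            (show ((U i) : ℕ) = ((U j) : ℕ) + k ↔ k = ((U i) : ℕ) - ((U j) : ℕ) by omega)
            rfl rfl)]
          rw [Finset.sum_ite_eq' (Finset.range N)]
          rw [if_pos (Finset.mem_range.mpr (by omega))]
        · rw [if_neg hba]
          exact Finset.sum_eq_zero fun k _ => if_neg (by omega)
      have h2 : (∑ k ∈ Finset.range N,
            if (((U j) : ℕ) = ((U i) : ℕ) + k ∧ k ≠ 0) then (starRingEnd ℂ) (v k) else 0)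
          = if ((U i) : ℕ) < ((U j) : ℕ) then
              (starRingEnd ℂ) (v (((U j) : ℕ) - ((U i) : ℕ))) else 0 := by
        by_cases hab : ((U i) : ℕ) < ((U j) : ℕ)
        · rw [if_pos hab]
          rw [Finset.sum_congr rfl (fun k _ => if_congr
            (show (((U j) : ℕ) = ((U i) : ℕ) + k ∧ k ≠ 0) ↔ k = ((U j) : ℕ) - ((U i) : ℕ)
              by omega)
            rfl rfl)]
          rw [Finset.sum_ite_eq' (Finset.range N)]
          rw [if_pos (Finset.mem_range.mpr (by omega))]
        · rw [if_neg hab]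
          exact Finset.sum_eq_zero fun k _ => if_neg (by omega)
      rw [h1, h2, hT, Tirr, ToepMat]
      by_cases hba : ((U j) : ℕ) ≤ ((U i) : ℕ)
      · rw [if_pos hba, if_pos hba, if_neg (by omega)]
        simp only [hv]
        rw [dif_pos (by omega : ((U i) : ℕ) - ((U j) : ℕ) < N)]
        rw [add_zero]
      · rw [if_neg hba, if_neg (by omega : ¬ ((U j) : ℕ) ≤ ((U i) : ℕ)), if_pos (by omega)]
        simp only [hv]
        rw [dif_pos (by omega : ((U j) : ℕ) - ((U i) : ℕ) < N)]
        rw [zero_add]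
    calc (P * T).trace
        = ∑ i, ∑ j, P i j * T j i := by
          simp [Matrix.trace, Matrix.diag, Matrix.mul_apply]
      _ = ∑ i, ∑ j, ∑ k ∈ Finset.range N,
            ((if ((U i) : ℕ) = ((U j) : ℕ) + k then P i j * v k else 0)
              + (if (((U j) : ℕ) = ((U i) : ℕ) + k ∧ k ≠ 0) then
                  P i j * (starRingEnd ℂ) (v k) else 0)) := by
          refine Finset.sum_congr rfl fun i _ => Finset.sum_congr rfl fun j _ => ?_
          rw [hTsum i j, Finset.mul_sum]
          exact Finset.sum_congr rfl fun k _ => by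
            rw [mul_add, mul_ite, mul_zero, mul_ite, mul_zero]
      _ = ∑ i, ∑ k ∈ Finset.range N, ∑ j,
            ((if ((U i) : ℕ) = ((U j) : ℕ) + k then P i j * v k else 0)
              + (if (((U j) : ℕ) = ((U i) : ℕ) + k ∧ k ≠ 0) then
                  P i j * (starRingEnd ℂ) (v k) else 0)) :=
          Finset.sum_congr rfl fun i _ => Finset.sum_comm
      _ = ∑ k ∈ Finset.range N, ∑ i, ∑ j,
            ((if ((U i) : ℕ) = ((U j) : ℕ) + k then P i j * v k else 0)
              + (if (((U j) : ℕ) = ((U i) : ℕ) + k ∧ k ≠ 0) then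
                  P i j * (starRingEnd ℂ) (v k) else 0)) :=
          Finset.sum_comm
      _ = ∑ k ∈ Finset.range N, (if k = 0 then v 0 else 0) := by
          refine Finset.sum_congr rfl fun k hk => ?_
          have hkN : k < N := Finset.mem_range.mp hk
          have hA : (∑ i, ∑ j, if ((U i) : ℕ) = ((U j) : ℕ) + k then P i j else 0)
              = (starRingEnd ℂ) (if k = 0 then 1 else 0) := by
            have step1 : (∑ i, ∑ j, if ((U i) : ℕ) = ((U j) : ℕ) + k then P i j else 0)
                = (starRingEnd ℂ) (∑ i, ∑ j,
                    if ((U i) : ℕ) = ((U j) : ℕ) + k then P j i else 0) := by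
              rw [map_sum]
              refine Finset.sum_congr rfl fun i _ => ?_
              rw [map_sum]
              refine Finset.sum_congr rfl fun j _ => ?_
              rw [apply_ite (starRingEnd ℂ), map_zero]
              exact if_congr Iff.rfl (by rw [← Complex.star_def]; exact (hPH.apply i j).symm) rfl
            rw [step1, Finset.sum_comm]
            rw [htr k hkN]
          have hB : (∑ i, ∑ j, if (((U j) : ℕ) = ((U i) : ℕ) + k ∧ k ≠ 0)
              then P i j else 0) = 0 := by
            by_cases hk0 : k = 0
            · exact Finset.sum_eq_zero fun i _ => Finset.sum_eq_zero fun j _ =>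
                if_neg (by simp [hk0])
            · have : (∑ i, ∑ j, if (((U j) : ℕ) = ((U i) : ℕ) + k ∧ k ≠ 0)
                  then P i j else 0)
                  = ∑ i, ∑ j, if ((U j) : ℕ) = ((U i) : ℕ) + k then P i j else 0 :=
                Finset.sum_congr rfl fun i _ => Finset.sum_congr rfl fun j _ =>
                  if_congr (and_iff_left hk0) rfl rfl
              rw [this, htr k hkN, if_neg hk0]
          calc (∑ i, ∑ j,
              ((if ((U i) : ℕ) = ((U j) : ℕ) + k then P i j * v k else 0)
                + (if (((U j) : ℕ) = ((U i) : ℕ) + k ∧ k ≠ 0) then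
                    P i j * (starRingEnd ℂ) (v k) else 0)))
              = (∑ i, ∑ j, if ((U i) : ℕ) = ((U j) : ℕ) + k then P i j else 0) * v k
                + (∑ i, ∑ j, if (((U j) : ℕ) = ((U i) : ℕ) + k ∧ k ≠ 0)
                    then P i j else 0) * (starRingEnd ℂ) (v k) := by
                rw [Finset.sum_mul, Finset.sum_mul, ← Finset.sum_add_distrib]
                refine Finset.sum_congr rfl fun i _ => ?_
                rw [Finset.sum_mul, Finset.sum_mul, ← Finset.sum_add_distrib]
                refine Finset.sum_congr rfl fun j _ => ?_
                rw [ite_mul, zero_mul, ite_mul, zero_mul]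
            _ = (if k = 0 then v 0 else 0) := by
                rw [hA, hB, zero_mul, add_zero]
                by_cases hk0 : k = 0
                · simp [hk0]
                · simp [hk0]
      _ = v 0 := by
          rw [Finset.sum_ite_eq' (Finset.range N) 0 (fun _ => v 0)]
          rw [if_pos (Finset.mem_range.mpr hNpos)]
      _ = u ⟨0, hNpos⟩ := by simp only [hv]; rw [dif_pos hNpos]
  -- T and W are PSD (diagonal blocks)
  have hTpsd : T.PosSemidef := by
    have := hPSD2.submatrix Sum.inl
    exact this
  have hWpsd : W.PosSemidef := by
    have := hPSD2.submatrix Sum.inr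
    exact this
  have hu0 : 0 ≤ (u ⟨0, hNpos⟩).re := by
    have h0 := psd_diag_re_nonneg hTpsd ⟨0, hNu⟩
    have : T ⟨0, hNu⟩ ⟨0, hNu⟩ = u ⟨0, hNpos⟩ := by
      simp [hT, Tirr, ToepMat]
    rwa [this] at h0
  have hWtr : 0 ≤ W.trace.re := psd_trace_re_nonneg hWpsd
  have htrT : T.trace.re = (N_u : ℝ) * (u ⟨0, hNpos⟩).re := by
    have : T.trace = (N_u : ℂ) * u ⟨0, hNpos⟩ := by
      rw [Matrix.trace]
      have : ∀ r : Fin N_u, T.diag r = u ⟨0, hNpos⟩ := by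
        intro r; simp [hT, Tirr, ToepMat, Matrix.diag]
      rw [Finset.sum_congr rfl fun r _ => this r]
      simp [mul_comm]
    rw [this]
    simp
  have hNu1 : (1 : ℝ) ≤ (N_u : ℝ) := by exact_mod_cast hNu
  rw [hexpand] at key
  simp only [Complex.sub_re, Complex.add_re] at key
  rw [hconj, ← hinner, htrPT] at key
  rw [htrT]
  nlinarith [hu0, hWtr]
end
end
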